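/- arXiv:2001.09274 — 5 statements merged into one kernel-verified Lean document; each statement's English description precedes it below -/
import Mathlib

section
/- Let σ₀ ∈ (1/2, 1) and 0 < a < b be fixed, and let a_L : {primes} → ℂ and κ > 0 be such that for every A > 0 one has ∑_{p ≤ x} |a_L(p)|² = κ·Li(x) + O_A(x/(log x)^A). Then for every A > 0, as ρ → ∞, ∑_{aρ ≤ p ≤ bρ} |a_L(p)|²·log p / p^{σ₀} = κ·(ρ^{1−σ₀}/(1−σ₀))·(b^{1−σ₀} − a^{1−σ₀}) + O_A(ρ^{1−σ₀}/(log ρ)^A). -/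
open Filter Real Set Asymptotics Finset

/-- The logarithmic integral `Li(x) = ∫_2^x dt / log t`. -/
noncomputable def Li (x : ℝ) : ℝ := ∫ t in (2 : ℝ)..x, 1 / Real.log t

/-- The finite set of primes `p ≤ x`. -/
noncomputable def primesUpTo (x : ℝ) : Finset ℕ :=
  (Finset.Iic ⌊x⌋₊).filter Nat.Prime

open scoped Classical in
/-- The finite set of primes `p` with `e⁻¹ ρ ≤ p ≤ e ρ`. -/
noncomputable def primesNear (ρ : ℝ) : Finset ℕ :=
  (Finset.Iic ⌊Real.exp 1 * ρ⌋₊).filter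
    (fun p => p.Prime ∧ Real.exp (-1) * ρ ≤ (p : ℝ) ∧ (p : ℝ) ≤ Real.exp 1 * ρ)

open scoped Classical in
/-- The finite set of primes `p` with `a ρ ≤ p ≤ b ρ`. -/
noncomputable def primesIn (a b ρ : ℝ) : Finset ℕ :=
  (Finset.Iic ⌊b * ρ⌋₊).filter
    (fun p => p.Prime ∧ a * ρ ≤ (p : ℝ) ∧ (p : ℝ) ≤ b * ρ)

/-- The weight `w_p = 1 - |log (p/ρ)|`. -/
noncomputable def weight (ρ : ℝ) (p : ℕ) : ℝ := 1 - |Real.log ((p : ℝ) / ρ)|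

/-- The constant `C_{σ₀} = (2 sinh((1-σ₀)/2) / (1-σ₀))²`. -/
noncomputable def Csigma (σ₀ : ℝ) : ℝ := (2 * Real.sinh ((1 - σ₀) / 2) / (1 - σ₀)) ^ 2

/-- The strong Selberg orthonormality condition for a family of coefficient
sequences `a_1, …, a_k` with constants `κ_1, …, κ_k`. -/
def SSOC {k : ℕ} (a : Fin k → ℕ → ℂ) (κ : Fin k → ℝ) : Prop :=
  ∀ i j : Fin k, ∀ A : ℝ, 0 < A →
    (fun x : ℝ => (∑ p ∈ primesUpTo x, a i p * (starRingEnd ℂ) (a j p)) -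
      (if i = j then (κ j : ℂ) * (Li x : ℂ) else 0)) =O[atTop]
    (fun x : ℝ => x / (Real.log x) ^ A)

open MeasureTheory intervalIntegral

lemma hasDerivAt_logdiv (σ : ℝ) {t : ℝ} (ht : 0 < t) :
    HasDerivAt (fun u : ℝ => Real.log u / u ^ σ)
      (t⁻¹ * t ^ (-σ) + Real.log t * (-σ * t ^ (-σ - 1))) t := by
  have h1 : HasDerivAt (fun u : ℝ => Real.log u * u ^ (-σ))
      (t⁻¹ * t ^ (-σ) + Real.log t * (-σ * t ^ (-σ - 1))) t := by
    have hl := Real.hasDerivAt_log ht.ne'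
    have hp := Real.hasDerivAt_rpow_const (x := t) (p := -σ) (Or.inl ht.ne')
    exact hl.mul hp
  refine h1.congr_of_eventuallyEq ?_
  filter_upwards [eventually_gt_nhds ht] with u hu
  rw [Real.rpow_neg hu.le, div_eq_mul_inv]

lemma contOn_logdiv' (σ : ℝ) : ContinuousOn
    (fun t : ℝ => t⁻¹ * t ^ (-σ) + Real.log t * (-σ * t ^ (-σ - 1))) {t : ℝ | 0 < t} := by
  have hne : ∀ x ∈ {t : ℝ | 0 < t}, x ≠ 0 := fun x hx => ne_of_gt hx
  apply ContinuousOn.add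
  · exact (continuousOn_inv₀.mono hne).mul
      (ContinuousOn.rpow_const continuousOn_id (fun x hx => Or.inl (hne x hx)))
  · exact (Real.continuousOn_log.mono hne).mul
      (continuousOn_const.mul (ContinuousOn.rpow_const continuousOn_id
        (fun x hx => Or.inl (hne x hx))))

lemma contOn_invlog {s : Set ℝ} (hs : s ⊆ Set.Ioi (1:ℝ)) :
    ContinuousOn (fun u : ℝ => 1 / Real.log u) s := by
  apply ContinuousOn.div continuousOn_const (Real.continuousOn_log.mono ?_) ?_
  · intro x hx
    have h2 : (1:ℝ) < x := hs hx
    show x ≠ 0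
    linarith
  · intro x hx
    have h2 : (1:ℝ) < x := hs hx
    exact (Real.log_pos h2).ne'

lemma hasDerivAt_Li {t : ℝ} (ht : 2 ≤ t) : HasDerivAt Li (1 / Real.log t) t := by
  have hint : IntervalIntegrable (fun u : ℝ => 1 / Real.log u) volume 2 t := by
    apply ContinuousOn.intervalIntegrable
    apply contOn_invlog
    rw [Set.uIcc_of_le ht]
    intro x hx
    have := hx.1
    show (1:ℝ) < x
    linarith
  have hco : ContinuousOn (fun u : ℝ => 1 / Real.log u) (Set.Ioi (1:ℝ)) :=
    contOn_invlog le_rfl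
  have hcont : ContinuousAt (fun u : ℝ => 1 / Real.log u) t :=
    hco.continuousAt (Ioi_mem_nhds (by linarith))
  exact intervalIntegral.integral_hasDerivAt_right hint
    (hco.stronglyMeasurableAtFilter isOpen_Ioi t (by simp; linarith)) hcont

lemma sum_primesIn_eq (σ a b ρ : ℝ) (aL : ℕ → ℂ) (h2 : 2 ≤ a * ρ) (hab : a * ρ ≤ b * ρ) :
    ∑ p ∈ primesIn a b ρ, ‖aL p‖ ^ 2 * Real.log p / (p:ℝ) ^ σ =
    ∑ k ∈ Finset.Ioc (⌈a*ρ⌉₊ - 1) ⌊b*ρ⌋₊,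
      (Real.log k / (k:ℝ) ^ σ) * (if k.Prime then ‖aL k‖^2 else 0) := by
  classical
  have hbρ : (0:ℝ) ≤ b * ρ := by linarith
  have hc1 : 0 < ⌈a*ρ⌉₊ := Nat.ceil_pos.mpr (by linarith)
  have hset : primesIn a b ρ = (Finset.Ioc (⌈a*ρ⌉₊ - 1) ⌊b*ρ⌋₊).filter Nat.Prime := by
    ext k
    simp only [primesIn, Finset.mem_filter, Finset.mem_Iic, Finset.mem_Ioc]
    constructor
    · rintro ⟨hk1, hk2, hk3, hk4⟩
      have hceil : ⌈a*ρ⌉₊ ≤ k := Nat.ceil_le.mpr hk3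
      exact ⟨⟨by omega, hk1⟩, hk2⟩
    · rintro ⟨⟨hk1, hk2⟩, hk3⟩
      refine ⟨hk2, hk3, ?_, ?_⟩
      · have hck : ⌈a*ρ⌉₊ ≤ k := by omega
        exact Nat.ceil_le.mp hck
      · exact (Nat.le_floor_iff hbρ).mp hk2
  rw [hset, Finset.sum_filter]
  apply Finset.sum_congr rfl
  intro k hk
  by_cases hp : k.Prime
  · simp only [hp, if_true]
    ring
  · simp [hp]

lemma abel_step (σ : ℝ) (c : ℕ → ℝ) (m : ℕ) (β : ℝ) (hm2 : 2 ≤ (m:ℝ)) (hmβ : (m:ℝ) ≤ β) :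
    ∑ k ∈ Finset.Ioc m ⌊β⌋₊, (Real.log k / (k:ℝ) ^ σ) * c k =
      (Real.log β / β ^ σ) * (∑ k ∈ Finset.Icc 0 ⌊β⌋₊, c k)
      - (Real.log m / (m:ℝ) ^ σ) * (∑ k ∈ Finset.Icc 0 m, c k)
      - ∫ t in Set.Ioc (m:ℝ) β,
          (t⁻¹ * t ^ (-σ) + Real.log t * (-σ * t ^ (-σ-1))) * (∑ k ∈ Finset.Icc 0 ⌊t⌋₊, c k) := by
  have hpos : ∀ t : ℝ, t ∈ Set.Icc (m:ℝ) β → 0 < t := fun t ht => by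
    have := ht.1; linarith
  have hf_diff : ∀ t ∈ Set.Icc (m:ℝ) β,
      DifferentiableAt ℝ (fun u : ℝ => Real.log u / u ^ σ) t :=
    fun t ht => (hasDerivAt_logdiv σ (hpos t ht)).differentiableAt
  have hEq : Set.EqOn (deriv (fun u : ℝ => Real.log u / u ^ σ))
      (fun t : ℝ => t⁻¹ * t ^ (-σ) + Real.log t * (-σ * t ^ (-σ-1))) (Set.Icc (m:ℝ) β) :=
    fun t ht => (hasDerivAt_logdiv σ (hpos t ht)).deriv
  have hint' : IntegrableOn
      (fun t : ℝ => t⁻¹ * t ^ (-σ) + Real.log t * (-σ * t ^ (-σ-1))) (Set.Icc (m:ℝ) β) := by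
    apply ContinuousOn.integrableOn_Icc
    exact (contOn_logdiv' σ).mono (fun t ht => hpos t ht)
  have hf_int : IntegrableOn (deriv (fun u : ℝ => Real.log u / u ^ σ)) (Set.Icc (m:ℝ) β) :=
    hint'.congr_fun (fun t ht => (hEq ht).symm) measurableSet_Icc
  have key := sum_mul_eq_sub_sub_integral_mul c (a := (m:ℝ)) (b := β)
    (by positivity) hmβ hf_diff hf_int
  rw [Nat.floor_natCast] at key
  rw [key]
  congr 1
  apply setIntegral_congr_fun measurableSet_Ioc
  intro t ht
  show deriv (fun u : ℝ => Real.log u / u ^ σ) t * _ = _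
  rw [hEq ⟨le_of_lt ht.1, ht.2⟩]

lemma li_parts (σ : ℝ) (hσ : σ < 1) {m β : ℝ} (hm : 2 ≤ m) (hmβ : m ≤ β) :
    ∫ t in Set.Ioc m β, (t⁻¹ * t ^ (-σ) + Real.log t * (-σ * t ^ (-σ-1))) * Li t
    = (Real.log β / β ^ σ) * Li β - (Real.log m / m ^ σ) * Li m
      - (β ^ (1-σ) - m ^ (1-σ)) / (1-σ) := by
  have huIcc : Set.uIcc m β = Set.Icc m β := Set.uIcc_of_le hmβ
  have hpos : ∀ x ∈ Set.uIcc m β, 0 < x := by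
    rw [huIcc]; intro x hx; have := hx.1; linarith
  have hge2 : ∀ x ∈ Set.uIcc m β, 2 ≤ x := by
    rw [huIcc]; intro x hx; have := hx.1; linarith
  have hder_u : ∀ x ∈ Set.uIcc m β, HasDerivAt (fun u : ℝ => Real.log u / u ^ σ)
      (x⁻¹ * x ^ (-σ) + Real.log x * (-σ * x ^ (-σ-1))) x :=
    fun x hx => hasDerivAt_logdiv σ (hpos x hx)
  have hder_v : ∀ x ∈ Set.uIcc m β, HasDerivAt Li (1 / Real.log x) x :=
    fun x hx => hasDerivAt_Li (hge2 x hx)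
  have hu' : IntervalIntegrable
      (fun x : ℝ => x⁻¹ * x ^ (-σ) + Real.log x * (-σ * x ^ (-σ-1))) volume m β :=
    ((contOn_logdiv' σ).mono (fun x hx => hpos x hx)).intervalIntegrable
  have hv' : IntervalIntegrable (fun x : ℝ => 1 / Real.log x) volume m β :=
    (contOn_invlog (fun x hx => by
      have := hge2 x hx; show (1:ℝ) < x; linarith)).intervalIntegrable
  have key := intervalIntegral.integral_mul_deriv_eq_deriv_mul hder_u hder_v hu' hv'
  have hlhs : ∫ x in m..β, (Real.log x / x ^ σ) * (1 / Real.log x) =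
      (β ^ (1-σ) - m ^ (1-σ)) / (1-σ) := by
    have h1 : ∫ x in m..β, (Real.log x / x ^ σ) * (1 / Real.log x) =
        ∫ x in m..β, x ^ (-σ) := by
      apply intervalIntegral.integral_congr
      intro x hx
      have h2 : 2 ≤ x := hge2 x hx
      have hlog : Real.log x ≠ 0 := (Real.log_pos (by linarith)).ne'
      have hx0 : (0:ℝ) < x := by linarith
      show Real.log x / x ^ σ * (1 / Real.log x) = x ^ (-σ)
      rw [Real.rpow_neg hx0.le]
      field_simp
    rw [h1, integral_rpow (Or.inl (by linarith))]
    have : -σ + 1 = 1 - σ := by ring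
    rw [this]
  rw [hlhs] at key
  rw [← intervalIntegral.integral_of_le hmβ]
  linarith [key]

lemma real_rpow_add_le {x y s : ℝ} (hx : 0 ≤ x) (hy : 0 ≤ y) (hs0 : 0 ≤ s) (hs1 : s ≤ 1) :
    (x + y) ^ s ≤ x ^ s + y ^ s := by
  have h := NNReal.rpow_add_le_add_rpow x.toNNReal y.toNNReal hs0 hs1
  rw [← NNReal.coe_le_coe] at h
  push_cast at h
  rwa [Real.coe_toNNReal x hx, Real.coe_toNNReal y hy] at h

lemma logdiv_mul_le {σ A C₁ v x : ℝ} (hC₁ : 0 ≤ C₁) (hx : 3 ≤ x) (hlx : 1 ≤ Real.log x)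
    (hv : |v| ≤ C₁ * (x / Real.log x ^ (A+1))) :
    |Real.log x / x ^ σ * v| ≤ C₁ * (x ^ (1-σ) / Real.log x ^ A) := by
  have hx0 : (0:ℝ) < x := by linarith
  have hl0 : (0:ℝ) < Real.log x := by linarith
  have hxσ : (0:ℝ) < x ^ σ := Real.rpow_pos_of_pos hx0 _
  have hfx : (0:ℝ) ≤ Real.log x / x ^ σ := by positivity
  rw [abs_mul, abs_of_nonneg hfx]
  calc Real.log x / x ^ σ * |v| ≤ Real.log x / x ^ σ * (C₁ * (x / Real.log x ^ (A+1))) :=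
        mul_le_mul_of_nonneg_left hv hfx
    _ = C₁ * (x ^ (1-σ) / Real.log x ^ A) := by
        rw [Real.rpow_sub hx0, Real.rpow_one, show A + 1 = A + 1 from rfl,
          Real.rpow_add hl0, Real.rpow_one]
        have hlA : (0:ℝ) < Real.log x ^ A := Real.rpow_pos_of_pos hl0 _
        field_simp

lemma f'_mul_bound {σ A C₁ t v : ℝ} (hσ0 : 0 < σ) (hσ1 : σ ≤ 1) (hC₁ : 0 ≤ C₁)
    (ht : 2 ≤ t) (hlt : 1 ≤ Real.log t)
    (hv : |v| ≤ C₁ * (t / Real.log t ^ (A+1))) :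
    ‖(t⁻¹ * t ^ (-σ) + Real.log t * (-σ * t ^ (-σ-1))) * v‖ ≤
      2 * C₁ * (t ^ (-σ) / Real.log t ^ A) := by
  have ht0 : (0:ℝ) < t := by linarith
  have hl0 : (0:ℝ) < Real.log t := by linarith
  have hp : (0:ℝ) < t ^ (-σ-1) := Real.rpow_pos_of_pos ht0 _
  have h1 : t⁻¹ * t ^ (-σ) = t ^ (-σ-1) := by
    rw [show -σ-1 = -1 + -σ by ring, Real.rpow_add ht0, Real.rpow_neg_one]
  have hf' : |t⁻¹ * t ^ (-σ) + Real.log t * (-σ * t ^ (-σ-1))| ≤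
      2 * Real.log t * t ^ (-σ-1) := by
    rw [h1]
    have h2 : |t ^ (-σ-1) + Real.log t * (-σ * t ^ (-σ-1))| ≤
        t ^ (-σ-1) + σ * Real.log t * t ^ (-σ-1) := by
      calc |t ^ (-σ-1) + Real.log t * (-σ * t ^ (-σ-1))|
          ≤ |t ^ (-σ-1)| + |Real.log t * (-σ * t ^ (-σ-1))| := abs_add_le _ _
        _ = t ^ (-σ-1) + σ * Real.log t * t ^ (-σ-1) := by
            rw [abs_of_nonneg hp.le, abs_mul, abs_of_nonneg hl0.le, abs_mul, abs_neg,
              abs_of_nonneg hσ0.le, abs_of_nonneg hp.le]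
            ring
    refine h2.trans ?_
    have h3 : 1 + σ * Real.log t ≤ 2 * Real.log t := by nlinarith
    nlinarith [mul_le_mul_of_nonneg_right h3 hp.le]
  rw [Real.norm_eq_abs, abs_mul]
  calc |t⁻¹ * t ^ (-σ) + Real.log t * (-σ * t ^ (-σ-1))| * |v|
      ≤ (2 * Real.log t * t ^ (-σ-1)) * (C₁ * (t / Real.log t ^ (A+1))) := by
        apply mul_le_mul hf' hv (abs_nonneg _)
        positivity
    _ = 2 * C₁ * (t ^ (-σ) / Real.log t ^ A) := by
        rw [show -σ-1 = -σ + -1 by ring, Real.rpow_add ht0, Real.rpow_neg_one,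
          Real.rpow_add hl0, Real.rpow_one]
        have hlA : (0:ℝ) < Real.log t ^ A := Real.rpow_pos_of_pos hl0 _
        field_simp

set_option maxHeartbeats 1000000 in
/-- Asymptotics for `∑_{aρ ≤ p ≤ bρ} |a_L(p)|² log p / p^{σ₀}`. -/
theorem sum_sq_log_window (σ₀ a b : ℝ) (hσ : σ₀ ∈ Set.Ioo (1/2 : ℝ) 1)
    (ha : 0 < a) (hab : a < b) (aL : ℕ → ℂ) (κ : ℝ) (hκ : 0 < κ)
    (h : ∀ A : ℝ, 0 < A →
      (fun x : ℝ => (∑ p ∈ primesUpTo x, ‖aL p‖ ^ 2) - κ * Li x) =O[atTop]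
        (fun x : ℝ => x / (Real.log x) ^ A)) :
    ∀ A : ℝ, 0 < A →
      (fun ρ : ℝ => (∑ p ∈ primesIn a b ρ, ‖aL p‖ ^ 2 * Real.log p / (p : ℝ) ^ σ₀) -
        κ * (ρ ^ (1 - σ₀) / (1 - σ₀)) * (b ^ (1 - σ₀) - a ^ (1 - σ₀))) =O[atTop]
      (fun ρ : ℝ => ρ ^ (1 - σ₀) / (Real.log ρ) ^ A) := by
  obtain ⟨hσ1, hσ2⟩ := hσ
  intro A hA
  have hb : 0 < b := ha.trans hab
  have hs : 0 < 1 - σ₀ := by linarith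
  have hσ0 : 0 < σ₀ := by linarith
  classical
  set c : ℕ → ℝ := fun k => if k.Prime then ‖aL k‖^2 else 0 with hc_def
  have hc0 : ∀ k, 0 ≤ c k := by
    intro k; simp only [hc_def]; split <;> positivity
  set S : ℝ → ℝ := fun x => ∑ k ∈ Finset.Icc 0 ⌊x⌋₊, c k with hS_def
  have hSmono : Monotone S := by
    intro x y hxy
    apply Finset.sum_le_sum_of_subset_of_nonneg
    · exact Finset.Icc_subset_Icc le_rfl (Nat.floor_le_floor hxy)
    · intro i _ _; exact hc0 i
  have hSprimes : ∀ x : ℝ, (∑ p ∈ primesUpTo x, ‖aL p‖^2) = S x := by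
    intro x
    have hIcc : Finset.Icc 0 ⌊x⌋₊ = Finset.Iic ⌊x⌋₊ := by ext k; simp
    show _ = ∑ k ∈ Finset.Icc 0 ⌊x⌋₊, c k
    rw [hIcc, primesUpTo, Finset.sum_filter]
  -- extract the error bound
  have hO := h (A+1) (by linarith)
  rw [Asymptotics.isBigO_iff] at hO
  obtain ⟨C₀, hC₀⟩ := hO
  set C₁ : ℝ := |C₀| + 1 with hC₁def
  have hC₁pos : (0:ℝ) < C₁ := by positivity
  have hEbound : ∀ᶠ x in atTop, |S x - κ * Li x| ≤ C₁ * (x / Real.log x ^ (A+1)) := by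
    filter_upwards [hC₀, eventually_ge_atTop (3:ℝ),
      Real.tendsto_log_atTop.eventually_ge_atTop 1] with x hx h3 hl
    have hxpos : (0:ℝ) < x := by linarith
    have hlp : (0:ℝ) < Real.log x ^ (A+1) := Real.rpow_pos_of_pos (by linarith) _
    rw [hSprimes x] at hx
    have h2 : ‖x / Real.log x ^ (A+1)‖ = x / Real.log x ^ (A+1) := by
      rw [Real.norm_of_nonneg]; positivity
    rw [h2, Real.norm_eq_abs] at hx
    calc |S x - κ*Li x| ≤ C₀ * (x / Real.log x ^ (A+1)) := hx
      _ ≤ C₁ * (x / Real.log x ^ (A+1)) := by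
          apply mul_le_mul_of_nonneg_right _ (by positivity)
          rw [hC₁def]; have := le_abs_self C₀; linarith
  rw [Filter.eventually_atTop] at hEbound
  obtain ⟨X₀, hX₀⟩ := hEbound
  rw [Asymptotics.isBigO_iff]
  refine ⟨κ/(1-σ₀) + 2*(C₁ * b^(1-σ₀) * (2:ℝ)^A) + 2*C₁*(a/2)^(-σ₀)*(2:ℝ)^A*b, ?_⟩
  have hev_a : ∀ᶠ ρ : ℝ in atTop, X₀ + 4 ≤ a * ρ :=
    (tendsto_id.const_mul_atTop ha).eventually_ge_atTop _
  have hev_6 : ∀ᶠ ρ : ℝ in atTop, 6 ≤ a * ρ :=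
    (tendsto_id.const_mul_atTop ha).eventually_ge_atTop _
  have hev_pow : ∀ᶠ ρ : ℝ in atTop, Real.log ρ ^ A ≤ ρ ^ (1-σ₀) := by
    have hlo := (isLittleO_log_rpow_rpow_atTop A hs).bound (by norm_num : (0:ℝ) < 1)
    filter_upwards [hlo, eventually_ge_atTop (1:ℝ),
      Real.tendsto_log_atTop.eventually_ge_atTop 1] with ρ h1 h2 h3
    have : ‖Real.log ρ ^ A‖ = Real.log ρ ^ A := by
      rw [Real.norm_of_nonneg]; positivity
    rw [this, one_mul, Real.norm_of_nonneg (by positivity : (0:ℝ) ≤ ρ ^ (1-σ₀))] at h1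
    exact h1
  filter_upwards [hev_a, hev_6, hev_pow,
    Real.tendsto_log_atTop.eventually_ge_atTop 1,
    Real.tendsto_log_atTop.eventually_ge_atTop (Real.log b),
    Real.tendsto_log_atTop.eventually_ge_atTop (-2*Real.log (a/2)),
    Real.tendsto_log_atTop.eventually_ge_atTop (-2*Real.log b),
    eventually_ge_atTop (1:ℝ)] with ρ h_a h_6 h_pow h_l1 h_l2 h_l3 h_l4 h_1
  have hρ0 : (0:ℝ) < ρ := by linarith
  have hbρ : a*ρ ≤ b*ρ := by nlinarith
  have hbρ0 : (0:ℝ) < b*ρ := by nlinarith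
  set L := Real.log ρ with hL_def
  have hLpos : (0:ℝ) < L := by linarith
  set m : ℕ := ⌈a*ρ⌉₊ - 1 with hm_def
  have hceil1 : 1 ≤ ⌈a*ρ⌉₊ := Nat.one_le_iff_ne_zero.mpr (by
    have : 0 < ⌈a*ρ⌉₊ := Nat.ceil_pos.mpr (by linarith)
    omega)
  have hm_cast : (m:ℝ) = (⌈a*ρ⌉₊ : ℝ) - 1 := by
    rw [hm_def, Nat.cast_sub hceil1, Nat.cast_one]
  have hm_low : a*ρ - 1 ≤ (m:ℝ) := by
    rw [hm_cast]; linarith [Nat.le_ceil (a*ρ)]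
  have hm_up : (m:ℝ) ≤ a*ρ := by
    rw [hm_cast]
    linarith [Nat.ceil_lt_add_one (show (0:ℝ) ≤ a*ρ by linarith)]
  have hm3 : 3 ≤ (m:ℝ) := by linarith
  have hm2 : 2 ≤ (m:ℝ) := by linarith
  have hm0 : (0:ℝ) < (m:ℝ) := by linarith
  have hmβ : (m:ℝ) ≤ b*ρ := le_trans hm_up hbρ
  have hmX₀ : X₀ ≤ (m:ℝ) := by linarith
  -- logarithm estimates
  have hlog_bρ_up : Real.log (b*ρ) ≤ 2*L := by
    rw [Real.log_mul hb.ne' hρ0.ne']; rw [hL_def] at *; linarith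
  have hlog_bρ_low : L/2 ≤ Real.log (b*ρ) := by
    rw [Real.log_mul hb.ne' hρ0.ne']; rw [hL_def] at *; linarith
  have hlog_m_low : L/2 ≤ Real.log m := by
    have h1 : a*ρ/2 ≤ (m:ℝ) := by linarith
    have h2 : Real.log (a*ρ/2) ≤ Real.log m := Real.log_le_log (by positivity) h1
    have h3 : Real.log (a*ρ/2) = Real.log (a/2) + L := by
      rw [show a*ρ/2 = (a/2)*ρ by ring, Real.log_mul (by positivity : (a/2:ℝ) ≠ 0) hρ0.ne']
    rw [hL_def] at *; linarith
  have hexp3 : Real.exp 1 ≤ 3 := by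
    have := Real.exp_one_lt_d9; linarith
  have hlog3 : ∀ x : ℝ, 3 ≤ x → 1 ≤ Real.log x := by
    intro x hx
    rw [Real.le_log_iff_exp_le (by linarith)]
    linarith
  have hlog_m_1 : 1 ≤ Real.log m := hlog3 _ hm3
  have hlog_bρ_1 : 1 ≤ Real.log (b*ρ) := hlog3 _ (by linarith)
  -- the three main identities
  have hsum := sum_primesIn_eq σ₀ a b ρ aL (by linarith) hbρ
  have habel := abel_step σ₀ c m (b*ρ) hm2 hmβ
  have hli := li_parts σ₀ hσ2 hm2 hmβ
  have hfold : ∀ t : ℝ, (∑ k ∈ Finset.Icc 0 ⌊t⌋₊, c k) = S t := fun t => rfl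
  simp only [hfold] at habel
  have hSm : (∑ k ∈ Finset.Icc 0 m, c k) = S (m:ℝ) := by
    show _ = ∑ k ∈ Finset.Icc 0 ⌊((m:ℕ):ℝ)⌋₊, c k
    rw [Nat.floor_natCast]
  rw [hSm] at habel
  have hsum2 : (∑ p ∈ primesIn a b ρ, ‖aL p‖ ^ 2 * Real.log p / (p:ℝ) ^ σ₀) =
      ∑ k ∈ Finset.Ioc m ⌊b*ρ⌋₊, (Real.log k / (k:ℝ) ^ σ₀) * c k := hsum
  -- integrability facts
  have hcont_f' : ContinuousOn
      (fun t : ℝ => t⁻¹ * t ^ (-σ₀) + Real.log t * (-σ₀ * t ^ (-σ₀-1)))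
      (Set.Icc (m:ℝ) (b*ρ)) :=
    (contOn_logdiv' σ₀).mono (fun t ht => by
      have := ht.1; show (0:ℝ) < t; linarith)
  have hLicont : ContinuousOn Li (Set.Icc (m:ℝ) (b*ρ)) := fun t ht =>
    ((hasDerivAt_Li (by have := ht.1; linarith : (2:ℝ) ≤ t)).continuousAt).continuousWithinAt
  have hf'Li_int : IntegrableOn
      (fun t : ℝ => (t⁻¹ * t ^ (-σ₀) + Real.log t * (-σ₀ * t ^ (-σ₀-1))) * Li t)
      (Set.Ioc (m:ℝ) (b*ρ)) :=
    ((hcont_f'.mul hLicont).integrableOn_Icc).mono_set Set.Ioc_subset_Icc_self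
  have hf'int : IntegrableOn
      (fun t : ℝ => t⁻¹ * t ^ (-σ₀) + Real.log t * (-σ₀ * t ^ (-σ₀-1)))
      (Set.Ioc (m:ℝ) (b*ρ)) := (hcont_f'.integrableOn_Icc).mono_set Set.Ioc_subset_Icc_self
  have hSmeas : Measurable S := hSmono.measurable
  have hf'S_int : IntegrableOn
      (fun t : ℝ => (t⁻¹ * t ^ (-σ₀) + Real.log t * (-σ₀ * t ^ (-σ₀-1))) * S t)
      (Set.Ioc (m:ℝ) (b*ρ)) := by
    have h1 : IntegrableOn
        (fun t : ℝ => S t * (t⁻¹ * t ^ (-σ₀) + Real.log t * (-σ₀ * t ^ (-σ₀-1))))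
        (Set.Ioc (m:ℝ) (b*ρ)) := by
      apply MeasureTheory.Integrable.bdd_mul (c := S (b*ρ)) hf'int (hSmeas.aestronglyMeasurable.restrict)
      rw [MeasureTheory.ae_restrict_iff' measurableSet_Ioc]
      filter_upwards with t ht
      rw [Real.norm_of_nonneg (Finset.sum_nonneg (fun i _ => hc0 i))]
      exact hSmono ht.2
    simpa [mul_comm] using h1
  have hsplit : (∫ t in Set.Ioc (m:ℝ) (b*ρ),
        (t⁻¹ * t ^ (-σ₀) + Real.log t * (-σ₀ * t ^ (-σ₀-1))) * (S t - κ * Li t))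
      = (∫ t in Set.Ioc (m:ℝ) (b*ρ),
          (t⁻¹ * t ^ (-σ₀) + Real.log t * (-σ₀ * t ^ (-σ₀-1))) * S t)
        - κ * ∫ t in Set.Ioc (m:ℝ) (b*ρ),
            (t⁻¹ * t ^ (-σ₀) + Real.log t * (-σ₀ * t ^ (-σ₀-1))) * Li t := by
    have h1 : (fun t : ℝ => (t⁻¹ * t ^ (-σ₀) + Real.log t * (-σ₀ * t ^ (-σ₀-1))) * (S t - κ * Li t))
        = fun t : ℝ => ((t⁻¹ * t ^ (-σ₀) + Real.log t * (-σ₀ * t ^ (-σ₀-1))) * S t)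
          - κ * ((t⁻¹ * t ^ (-σ₀) + Real.log t * (-σ₀ * t ^ (-σ₀-1))) * Li t) := by
      funext t; ring
    rw [h1, MeasureTheory.integral_sub hf'S_int (hf'Li_int.const_mul κ),
      MeasureTheory.integral_const_mul]
  -- the main algebraic decomposition
  have hmain : (∑ p ∈ primesIn a b ρ, ‖aL p‖ ^ 2 * Real.log p / (p : ℝ) ^ σ₀) -
      κ * (ρ ^ (1 - σ₀) / (1 - σ₀)) * (b ^ (1 - σ₀) - a ^ (1 - σ₀))
      = (Real.log (b*ρ) / (b*ρ) ^ σ₀) * (S (b*ρ) - κ * Li (b*ρ))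
        - (Real.log (m:ℝ) / (m:ℝ) ^ σ₀) * (S (m:ℝ) - κ * Li (m:ℝ))
        - (∫ t in Set.Ioc (m:ℝ) (b*ρ),
            (t⁻¹ * t ^ (-σ₀) + Real.log t * (-σ₀ * t ^ (-σ₀-1))) * (S t - κ * Li t))
        + κ * (((a*ρ) ^ (1-σ₀) - (m:ℝ) ^ (1-σ₀)) / (1-σ₀)) := by
    have hBr : (b*ρ) ^ (1-σ₀) = b ^ (1-σ₀) * ρ ^ (1-σ₀) := Real.mul_rpow hb.le hρ0.le
    have hAr : (a*ρ) ^ (1-σ₀) = a ^ (1-σ₀) * ρ ^ (1-σ₀) := Real.mul_rpow ha.le hρ0.le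
    rw [hsum2, habel, hsplit, hli, hBr, hAr]
    ring
  rw [hmain]
  -- bounding the four terms
  have hLA : (0:ℝ) < L ^ A := Real.rpow_pos_of_pos hLpos _
  have hD : (0:ℝ) < ρ ^ (1-σ₀) / L ^ A := by
    have : (0:ℝ) < ρ ^ (1-σ₀) := Real.rpow_pos_of_pos hρ0 _
    positivity
  have hD1 : (1:ℝ) ≤ ρ ^ (1-σ₀) / L ^ A := (one_le_div hLA).mpr h_pow
  have hnorm_rhs : ‖ρ ^ (1-σ₀) / Real.log ρ ^ A‖ = ρ ^ (1-σ₀) / L ^ A := by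
    rw [Real.norm_of_nonneg hD.le]
  have hT4 : |κ * (((a*ρ) ^ (1-σ₀) - (m:ℝ) ^ (1-σ₀)) / (1-σ₀))| ≤
      κ/(1-σ₀) * (ρ^(1-σ₀)/L^A) := by
    have h0 : 0 ≤ (a*ρ) ^ (1-σ₀) - (m:ℝ) ^ (1-σ₀) :=
      sub_nonneg.mpr (Real.rpow_le_rpow hm0.le hm_up hs.le)
    have h1 : (a*ρ) ^ (1-σ₀) - (m:ℝ) ^ (1-σ₀) ≤ 1 := by
      have h2 : (a*ρ) ^ (1-σ₀) ≤ (m:ℝ) ^ (1-σ₀) + (a*ρ - m) ^ (1-σ₀) := by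
        have h5 := real_rpow_add_le (x := (m:ℝ)) (y := a*ρ - m) hm0.le
          (by linarith) hs.le (by linarith)
        rw [show (m:ℝ) + (a*ρ - (m:ℝ)) = a*ρ by ring] at h5
        exact h5
      have h3 : (a*ρ - (m:ℝ)) ^ (1-σ₀) ≤ 1 :=
        Real.rpow_le_one (by linarith) (by linarith) hs.le
      linarith
    rw [abs_of_nonneg (mul_nonneg hκ.le (div_nonneg h0 hs.le))]
    calc κ * (((a*ρ) ^ (1-σ₀) - (m:ℝ) ^ (1-σ₀)) / (1-σ₀)) ≤ κ * (1 / (1-σ₀)) :=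
          mul_le_mul_of_nonneg_left ((div_le_div_iff_of_pos_right hs).mpr h1) hκ.le
      _ = κ/(1-σ₀) * 1 := by ring
      _ ≤ κ/(1-σ₀) * (ρ^(1-σ₀)/L^A) :=
          mul_le_mul_of_nonneg_left hD1 (by positivity)
  have hcompare : ∀ x : ℝ, 0 < x → x ≤ b*ρ → L/2 ≤ Real.log x →
      x ^ (1-σ₀) / Real.log x ^ A ≤ b^(1-σ₀) * (2:ℝ)^A * (ρ^(1-σ₀)/L^A) := by
    intro x hx0 hxb hlx
    have h2 : x ^ (1-σ₀) / Real.log x ^ A ≤ (b*ρ)^(1-σ₀) / (L/2)^A :=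
      div_le_div₀ (Real.rpow_nonneg (by positivity) _)
        (Real.rpow_le_rpow hx0.le hxb hs.le)
        (Real.rpow_pos_of_pos (by linarith) _)
        (Real.rpow_le_rpow (by linarith) hlx hA.le)
    refine h2.trans_eq ?_
    rw [Real.mul_rpow hb.le hρ0.le, Real.div_rpow hLpos.le (by norm_num : (0:ℝ) ≤ 2)]
    have h2A : (0:ℝ) < (2:ℝ)^A := Real.rpow_pos_of_pos (by norm_num) _
    field_simp
  have hEβ := hX₀ (b*ρ) (by linarith)
  have hT2 : |Real.log (b*ρ) / (b*ρ) ^ σ₀ * (S (b*ρ) - κ * Li (b*ρ))| ≤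
      C₁ * (b^(1-σ₀) * (2:ℝ)^A * (ρ^(1-σ₀)/L^A)) := by
    have h1 := logdiv_mul_le (σ := σ₀) hC₁pos.le (by linarith : (3:ℝ) ≤ b*ρ) hlog_bρ_1 hEβ
    refine h1.trans ?_
    exact mul_le_mul_of_nonneg_left (hcompare (b*ρ) hbρ0 le_rfl hlog_bρ_low) hC₁pos.le
  have hEm := hX₀ (m:ℝ) hmX₀
  have hT3 : |Real.log (m:ℝ) / (m:ℝ) ^ σ₀ * (S (m:ℝ) - κ * Li (m:ℝ))| ≤
      C₁ * (b^(1-σ₀) * (2:ℝ)^A * (ρ^(1-σ₀)/L^A)) := by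
    have h1 := logdiv_mul_le (σ := σ₀) hC₁pos.le hm3 hlog_m_1 hEm
    refine h1.trans ?_
    exact mul_le_mul_of_nonneg_left (hcompare (m:ℝ) hm0 hmβ hlog_m_low) hC₁pos.le
  have hT1 : ‖∫ t in Set.Ioc (m:ℝ) (b*ρ),
      (t⁻¹ * t ^ (-σ₀) + Real.log t * (-σ₀ * t ^ (-σ₀-1))) * (S t - κ * Li t)‖ ≤
      2*C₁*(a/2)^(-σ₀)*(2:ℝ)^A*b * (ρ^(1-σ₀)/L^A) := by
    have hmeaslt : volume (Set.Ioc ((m:ℕ):ℝ) (b*ρ)) < ⊤ := measure_Ioc_lt_top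
    have hptwise : ∀ t ∈ Set.Ioc ((m:ℕ):ℝ) (b*ρ),
        ‖(t⁻¹ * t ^ (-σ₀) + Real.log t * (-σ₀ * t ^ (-σ₀-1))) * (S t - κ * Li t)‖ ≤
        2*C₁*((a*ρ/2)^(-σ₀)/(L/2)^A) := by
      intro t ht
      have htm : (m:ℝ) < t := ht.1
      have ht2 : (2:ℝ) ≤ t := by linarith
      have hlogt1 : 1 ≤ Real.log t := hlog3 t (by linarith)
      have hEt := hX₀ t (by linarith)
      have h1 := f'_mul_bound hσ0 hσ2.le hC₁pos.le ht2 hlogt1 hEt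
      refine h1.trans ?_
      have hlogtm : Real.log (m:ℝ) ≤ Real.log t := Real.log_le_log hm0 htm.le
      have h2 : t^(-σ₀) ≤ (a*ρ/2)^(-σ₀) :=
        Real.rpow_le_rpow_of_nonpos (by linarith) (by linarith) (by linarith)
      have h3 : (L/2)^A ≤ Real.log t ^ A :=
        Real.rpow_le_rpow (by linarith) (by linarith) hA.le
      gcongr
    have hint_tot : IntegrableOn
        (fun t : ℝ => (t⁻¹ * t ^ (-σ₀) + Real.log t * (-σ₀ * t ^ (-σ₀-1))) * (S t - κ * Li t))
        (Set.Ioc ((m:ℕ):ℝ) (b*ρ)) :=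
      (hf'S_int.sub (hf'Li_int.const_mul κ)).congr
        (Filter.Eventually.of_forall (fun t => by simp only [Pi.sub_apply]; ring))
    have hbound := MeasureTheory.norm_setIntegral_le_of_norm_le_const hmeaslt hptwise
    refine hbound.trans ?_
    have hvol : (volume (Set.Ioc ((m:ℕ):ℝ) (b*ρ))).toReal = b*ρ - m := by
      rw [Real.volume_Ioc, ENNReal.toReal_ofReal (by linarith)]
    rw [measureReal_def, hvol]
    have e1 : (a*ρ/2)^(-σ₀) = (a/2)^(-σ₀) * ρ^(-σ₀) := by
      rw [show a*ρ/2 = (a/2)*ρ by ring, Real.mul_rpow (by positivity) hρ0.le]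
    have e2 : (L/2)^A = L^A/(2:ℝ)^A := Real.div_rpow hLpos.le (by norm_num : (0:ℝ) ≤ 2) A
    have e3 : ρ^(-σ₀) * ρ = ρ^(1-σ₀) := by
      rw [show (1-σ₀) = -σ₀ + 1 by ring, Real.rpow_add hρ0, Real.rpow_one]
    have h2A : (0:ℝ) < (2:ℝ)^A := Real.rpow_pos_of_pos (by norm_num) _
    have ha2 : (0:ℝ) < (a/2)^(-σ₀) := Real.rpow_pos_of_pos (by positivity) _
    have hρσ : (0:ℝ) < ρ^(-σ₀) := Real.rpow_pos_of_pos hρ0 _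
    calc 2*C₁*((a*ρ/2)^(-σ₀)/(L/2)^A) * (b*ρ - m)
        ≤ 2*C₁*((a*ρ/2)^(-σ₀)/(L/2)^A) * (b*ρ) := by
          have hp1 : (0:ℝ) < (a*ρ/2)^(-σ₀) := Real.rpow_pos_of_pos (by linarith) _
          have hp2 : (0:ℝ) < (L/2)^A := Real.rpow_pos_of_pos (by linarith) _
          exact mul_le_mul_of_nonneg_left (by linarith) (by positivity)
      _ = 2*C₁*(a/2)^(-σ₀)*(2:ℝ)^A*b * (ρ^(1-σ₀)/L^A) := by
          rw [e1, e2, ← e3]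
          field_simp
  -- put everything together
  rw [hnorm_rhs]
  have hCCD : (κ/(1-σ₀) + 2*(C₁ * b^(1-σ₀) * (2:ℝ)^A) + 2*C₁*(a/2)^(-σ₀)*(2:ℝ)^A*b)
        * (ρ^(1-σ₀)/L^A)
      = κ/(1-σ₀) * (ρ^(1-σ₀)/L^A)
        + (C₁ * (b^(1-σ₀) * (2:ℝ)^A * (ρ^(1-σ₀)/L^A))
          + C₁ * (b^(1-σ₀) * (2:ℝ)^A * (ρ^(1-σ₀)/L^A)))
        + 2*C₁*(a/2)^(-σ₀)*(2:ℝ)^A*b * (ρ^(1-σ₀)/L^A) := by ring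
  rw [hCCD]
  have h2' := abs_le.mp hT2
  have h3' := abs_le.mp hT3
  have h4' := abs_le.mp hT4
  have h1' := abs_le.mp (by rwa [Real.norm_eq_abs] at hT1)
  rw [Real.norm_eq_abs, abs_le]
  constructor <;> linarith [h2'.1, h2'.2, h3'.1, h3'.2, h4'.1, h4'.2, h1'.1, h1'.2]
end

section
/- There exists an absolute constant C > 0 such that for every real ρ ≥ 3 and every σ₀ ∈ [1/2, 1], ∑_{k ≥ 2} ∑_{p prime : e^{−1}ρ ≤ p^k ≤ eρ} p^{−k σ₀} ≤ C·ρ^{1/2 − σ₀}. -/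
open Finset Real

open scoped Classical in
/-- The contribution of prime powers `p^k` with `k ≥ 2` and `e⁻¹ρ ≤ p^k ≤ eρ` is
`O(ρ^{1/2 - σ₀})`, uniformly in `σ₀ ∈ [1/2, 1]`. -/
theorem prime_power_tail_bound :
    ∃ C : ℝ, 0 < C ∧ ∀ ρ : ℝ, 3 ≤ ρ → ∀ σ₀ ∈ Set.Icc (1/2 : ℝ) 1,
      ∑ k ∈ Finset.Icc 2 ⌊Real.logb 2 (Real.exp 1 * ρ)⌋₊,
        ∑ p ∈ (Finset.Iic ⌊Real.exp 1 * ρ⌋₊).filter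
          (fun p : ℕ => p.Prime ∧ Real.exp (-1) * ρ ≤ (p : ℝ) ^ k ∧ (p : ℝ) ^ k ≤ Real.exp 1 * ρ),
          (p : ℝ) ^ (-(k : ℝ) * σ₀) ≤ C * ρ ^ (1/2 - σ₀) := by
  refine ⟨30 * Real.exp 1 ^ 2, by positivity, ?_⟩
  intro ρ hρ σ₀ hσ
  obtain ⟨hσ1, hσ2⟩ := hσ
  set E : ℝ := Real.exp 1 with hE
  have hE1 : (1:ℝ) ≤ E := Real.one_le_exp zero_le_one
  have hE3 : E ≤ 3 := by
    have := Real.exp_one_lt_d9; linarith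
  have hρ0 : (0:ℝ) < ρ := by linarith
  have hρ1 : (1:ℝ) ≤ ρ := by linarith
  have hEρ1 : (1:ℝ) ≤ E * ρ := by nlinarith
  have hEρ0 : (0:ℝ) < E * ρ := by linarith
  set K := ⌊Real.logb 2 (E * ρ)⌋₊ with hK
  -- uniform bound on a single term
  have hterm : ∀ k : ℕ, 2 ≤ k → ∀ p : ℕ, p.Prime → Real.exp (-1) * ρ ≤ (p : ℝ) ^ k →
      (p : ℝ) ^ (-(k : ℝ) * σ₀) ≤ E * ρ ^ (-σ₀) := by
    intro k hk p hp hlow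
    have hp0 : (0:ℝ) < p := by exact_mod_cast hp.pos
    have hlow0 : (0:ℝ) < Real.exp (-1) * ρ := by positivity
    have h1 : (p : ℝ) ^ (-(k : ℝ) * σ₀) = ((p : ℝ) ^ k) ^ (-σ₀) := by
      rw [← Real.rpow_natCast (p:ℝ) k, ← Real.rpow_mul hp0.le]
      congr 1; ring
    rw [h1]
    have h2 : ((p : ℝ) ^ k) ^ (-σ₀) ≤ (Real.exp (-1) * ρ) ^ (-σ₀) :=
      Real.rpow_le_rpow_of_nonpos hlow0 hlow (by linarith)
    refine h2.trans ?_
    rw [Real.mul_rpow (Real.exp_pos _).le hρ0.le]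
    have hfac : Real.exp (-1) ^ (-σ₀) ≤ E := by
      rw [← Real.exp_mul, hE]
      exact Real.exp_le_exp.mpr (by nlinarith)
    exact mul_le_mul_of_nonneg_right hfac (Real.rpow_nonneg hρ0.le _)
  -- bound on the inner sum, for each k
  have hinner : ∀ k : ℕ, 2 ≤ k →
      ∑ p ∈ (Finset.Iic ⌊E * ρ⌋₊).filter
          (fun p : ℕ => p.Prime ∧ Real.exp (-1) * ρ ≤ (p : ℝ) ^ k ∧ (p : ℝ) ^ k ≤ E * ρ),
          (p : ℝ) ^ (-(k : ℝ) * σ₀) ≤ 2 * E ^ 2 * (ρ ^ ((1:ℝ)/k) * ρ ^ (-σ₀)) := by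
    intro k hk
    have hk0 : (k:ℝ) ≠ 0 := by positivity
    set s := (Finset.Iic ⌊E * ρ⌋₊).filter
          (fun p : ℕ => p.Prime ∧ Real.exp (-1) * ρ ≤ (p : ℝ) ^ k ∧ (p : ℝ) ^ k ≤ E * ρ) with hs
    have hcard : (s.card : ℝ) ≤ 2 * (E * ρ) ^ ((1:ℝ)/k) := by
      have hx1 : (1:ℝ) ≤ (E * ρ) ^ ((1:ℝ)/k) := Real.one_le_rpow hEρ1 (by positivity)
      have hsub : s ⊆ Finset.Iic ⌊(E * ρ) ^ ((1:ℝ)/k)⌋₊ := by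
        intro p hps
        rw [hs, Finset.mem_filter] at hps
        obtain ⟨-, hp, -, hup⟩ := hps
        rw [Finset.mem_Iic, Nat.le_floor_iff (by positivity)]
        have hple : ((p:ℝ) ^ k) ^ ((1:ℝ)/k) ≤ (E * ρ) ^ ((1:ℝ)/k) :=
          Real.rpow_le_rpow (by positivity) hup (by positivity)
        rwa [← Real.rpow_natCast (p:ℝ) k, ← Real.rpow_mul (by positivity),
          mul_one_div, div_self hk0, Real.rpow_one] at hple
      calc (s.card : ℝ) ≤ ((Finset.Iic ⌊(E * ρ) ^ ((1:ℝ)/k)⌋₊).card : ℝ) := by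
            exact_mod_cast Finset.card_le_card hsub
        _ = (⌊(E * ρ) ^ ((1:ℝ)/k)⌋₊ : ℝ) + 1 := by
            rw [Nat.card_Iic]; push_cast; ring
        _ ≤ (E * ρ) ^ ((1:ℝ)/k) + 1 := by
            have := Nat.floor_le (R := ℝ) (a := (E * ρ) ^ ((1:ℝ)/k)) (by positivity)
            linarith
        _ ≤ 2 * (E * ρ) ^ ((1:ℝ)/k) := by linarith
    have hsum : ∑ p ∈ s, (p : ℝ) ^ (-(k : ℝ) * σ₀) ≤ s.card • (E * ρ ^ (-σ₀)) := by
      refine Finset.sum_le_card_nsmul _ _ _ ?_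
      intro p hps
      rw [hs, Finset.mem_filter] at hps
      exact hterm k hk p hps.2.1 hps.2.2.1
    rw [nsmul_eq_mul] at hsum
    refine hsum.trans ?_
    have hEE : E ^ ((1:ℝ)/k) ≤ E := by
      rw [hE, Real.exp_one_rpow]
      exact Real.exp_le_exp.mpr (by
        rw [div_le_one (by positivity)]
        exact_mod_cast (by omega : 1 ≤ k))
    have hEk : (E * ρ) ^ ((1:ℝ)/k) ≤ E * ρ ^ ((1:ℝ)/k) := by
      rw [Real.mul_rpow (by positivity) hρ0.le]
      gcongr
    calc (s.card : ℝ) * (E * ρ ^ (-σ₀))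
        ≤ (2 * (E * ρ) ^ ((1:ℝ)/k)) * (E * ρ ^ (-σ₀)) := by
          have : (0:ℝ) ≤ E * ρ ^ (-σ₀) := by positivity
          exact mul_le_mul_of_nonneg_right hcard this
      _ ≤ (2 * (E * ρ ^ ((1:ℝ)/k))) * (E * ρ ^ (-σ₀)) := by
          have : (0:ℝ) ≤ E * ρ ^ (-σ₀) := by positivity
          gcongr
      _ = 2 * E ^ 2 * (ρ ^ ((1:ℝ)/k) * ρ ^ (-σ₀)) := by ring
  -- bounds on K
  have hE2 : (2:ℝ) ≤ E := by
    have := Real.exp_one_gt_d9; linarith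
  have hK2 : 2 ≤ K := by
    rw [hK]
    apply Nat.le_floor
    rw [Real.le_logb_iff_rpow_le one_lt_two hEρ0]
    have h4 : (2:ℝ) ^ ((2:ℕ):ℝ) = 4 := by
      rw [Real.rpow_natCast]; norm_num
    push_cast
    push_cast at h4
    rw [h4]
    nlinarith
  have hKle : (K : ℝ) ≤ Real.logb 2 (E * ρ) :=
    Nat.floor_le (Real.logb_nonneg one_lt_two hEρ1)
  have h16 : (1:ℝ) ≤ ρ ^ ((1:ℝ)/6) := Real.one_le_rpow hρ1 (by norm_num)
  have hlog : Real.log ρ ≤ 6 * ρ ^ ((1:ℝ)/6) := by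
    have h := Real.log_le_rpow_div hρ0.le (by norm_num : (0:ℝ) < 1/6)
    have : ρ ^ ((1:ℝ)/6) / (1/6) = 6 * ρ ^ ((1:ℝ)/6) := by ring
    linarith [this ▸ h]
  have hlb : Real.logb 2 (E * ρ) ≤ 14 * ρ ^ ((1:ℝ)/6) := by
    rw [Real.logb, Real.log_mul (by positivity) (by positivity), hE, Real.log_exp]
    have hl2 : (0.6931471803 : ℝ) < Real.log 2 := Real.log_two_gt_d9
    rw [div_le_iff₀ (by linarith)]
    nlinarith [mul_le_mul_of_nonneg_left hl2.le (by positivity : (0:ℝ) ≤ 14 * ρ ^ ((1:ℝ)/6))]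
  -- split off k = 2
  have hsplit : Finset.Icc 2 K = insert 2 (Finset.Icc 3 K) := by
    ext x
    simp only [Finset.mem_insert, Finset.mem_Icc]
    omega
  rw [hsplit, Finset.sum_insert (by simp [Finset.mem_Icc])]
  -- the k = 2 term
  have h2 : ∑ p ∈ (Finset.Iic ⌊E * ρ⌋₊).filter
          (fun p : ℕ => p.Prime ∧ Real.exp (-1) * ρ ≤ (p : ℝ) ^ 2 ∧ (p : ℝ) ^ 2 ≤ E * ρ),
          (p : ℝ) ^ (-((2:ℕ) : ℝ) * σ₀) ≤ 2 * E ^ 2 * ρ ^ (1/2 - σ₀) := by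
    refine (hinner 2 le_rfl).trans (le_of_eq ?_)
    rw [show ((1:ℝ)/((2:ℕ):ℝ)) = 1/2 by norm_num, ← Real.rpow_add hρ0,
      show (1:ℝ)/2 + -σ₀ = 1/2 - σ₀ by ring]
  -- the tail
  have htail : ∑ k ∈ Finset.Icc 3 K, ∑ p ∈ (Finset.Iic ⌊E * ρ⌋₊).filter
          (fun p : ℕ => p.Prime ∧ Real.exp (-1) * ρ ≤ (p : ℝ) ^ k ∧ (p : ℝ) ^ k ≤ E * ρ),
          (p : ℝ) ^ (-(k : ℝ) * σ₀) ≤ 28 * E ^ 2 * ρ ^ (1/2 - σ₀) := by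
    have hstep : ∀ k ∈ Finset.Icc 3 K, ∑ p ∈ (Finset.Iic ⌊E * ρ⌋₊).filter
          (fun p : ℕ => p.Prime ∧ Real.exp (-1) * ρ ≤ (p : ℝ) ^ k ∧ (p : ℝ) ^ k ≤ E * ρ),
          (p : ℝ) ^ (-(k : ℝ) * σ₀) ≤ 2 * E ^ 2 * (ρ ^ ((1:ℝ)/3) * ρ ^ (-σ₀)) := by
      intro k hkm
      rw [Finset.mem_Icc] at hkm
      refine (hinner k (by omega)).trans ?_
      have hkk : ((1:ℝ)/k) ≤ 1/3 := by
        have h3k : (3:ℝ) ≤ (k:ℝ) := by exact_mod_cast hkm.1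
        rw [div_le_div_iff₀ (by linarith) (by norm_num)]
        linarith
      have h5 := Real.rpow_le_rpow_of_exponent_le hρ1 hkk
      have hnn : (0:ℝ) ≤ ρ ^ (-σ₀) := Real.rpow_nonneg hρ0.le _
      exact mul_le_mul_of_nonneg_left (mul_le_mul_of_nonneg_right h5 hnn) (by positivity)
    refine (Finset.sum_le_card_nsmul _ _ _ hstep).trans ?_
    rw [nsmul_eq_mul]
    have hcard : ((Finset.Icc 3 K).card : ℝ) ≤ 14 * ρ ^ ((1:ℝ)/6) := by
      rw [Nat.card_Icc]
      calc ((K + 1 - 3 : ℕ) : ℝ) ≤ (K : ℝ) := by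
            have : K + 1 - 3 ≤ K := by omega
            exact_mod_cast this
        _ ≤ 14 * ρ ^ ((1:ℝ)/6) := hKle.trans hlb
    have hkey : ρ ^ ((1:ℝ)/6) * (ρ ^ ((1:ℝ)/3) * ρ ^ (-σ₀)) = ρ ^ (1/2 - σ₀) := by
      rw [← Real.rpow_add hρ0, ← Real.rpow_add hρ0]
      congr 1; ring
    have hpos : (0:ℝ) ≤ 2 * E ^ 2 * (ρ ^ ((1:ℝ)/3) * ρ ^ (-σ₀)) := by positivity
    calc ((Finset.Icc 3 K).card : ℝ) * (2 * E ^ 2 * (ρ ^ ((1:ℝ)/3) * ρ ^ (-σ₀)))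
        ≤ (14 * ρ ^ ((1:ℝ)/6)) * (2 * E ^ 2 * (ρ ^ ((1:ℝ)/3) * ρ ^ (-σ₀))) :=
          mul_le_mul_of_nonneg_right hcard hpos
      _ = 28 * E ^ 2 * (ρ ^ ((1:ℝ)/6) * (ρ ^ ((1:ℝ)/3) * ρ ^ (-σ₀))) := by ring
      _ = 28 * E ^ 2 * ρ ^ (1/2 - σ₀) := by rw [hkey]
  have := add_le_add h2 htail
  calc _ ≤ 2 * E ^ 2 * ρ ^ (1/2 - σ₀) + 28 * E ^ 2 * ρ ^ (1/2 - σ₀) := by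
        push_cast at h2 ⊢
        exact add_le_add h2 htail
    _ = 30 * E ^ 2 * ρ ^ (1/2 - σ₀) := by ring
end

section
/- For all real numbers θ, all real β with |β| ≥ 1, and all real τ > 0, one has ∫_{−τ}^{τ} (sin(t/2)/t)²·(1 + cos(θ + βt)) dt ≤ π/2. -/
open Real MeasureTheory FourierTransform Set intervalIntegral Filter


noncomputable def fejerTri : ℝ → ℂ := fun s => ((max 0 (1 - |s|) : ℝ) : ℂ)

lemma fejerTri_continuous : Continuous fejerTri :=
  Complex.continuous_ofReal.comp (continuous_const.max (by continuity))

lemma fejerTri_eq_zero {s : ℝ} (hs : 1 ≤ |s|) : fejerTri s = 0 := by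
  have : (1 : ℝ) - |s| ≤ 0 := by linarith
  simp [fejerTri, max_eq_left this]

lemma fejerTri_integrable : Integrable fejerTri := by
  apply fejerTri_continuous.integrable_of_hasCompactSupport
  apply HasCompactSupport.intro (isCompact_Icc (a := (-1:ℝ)) (b := 1))
  intro x hx
  apply fejerTri_eq_zero
  simp only [Set.mem_Icc, not_and_or, not_le] at hx
  rcases hx with h | h
  · rw [abs_of_neg (by linarith)]; linarith
  · rw [abs_of_pos (by linarith)]; linarith




lemma hasDeriv_exp_mul (a : ℂ) (v : ℝ) :
    HasDerivAt (fun v : ℝ => Complex.exp (a * v)) (a * Complex.exp (a * v)) v := by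
  have h1 : HasDerivAt (fun v : ℝ => a * (v : ℂ)) a v := by
    simpa using (Complex.ofRealCLM.hasDerivAt (x := v)).const_mul a
  simpa [mul_comm] using h1.cexp

lemma cont_exp_mul (a : ℂ) : Continuous fun v : ℝ => Complex.exp (a * v) :=
  Complex.continuous_exp.comp (continuous_const.mul Complex.continuous_ofReal)

lemma int01 (a : ℂ) (ha : a ≠ 0) :
    (∫ v in (0 : ℝ)..1, Complex.exp (a * v) * (1 - (v : ℂ)))
      = Complex.exp a / a ^ 2 - 1 / a - 1 / a ^ 2 := by
  have hF : ∀ v : ℝ, HasDerivAt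
      (fun v : ℝ => (1 - (v : ℂ)) * Complex.exp (a * v) / a + Complex.exp (a * v) / a ^ 2)
      (Complex.exp (a * v) * (1 - (v : ℂ))) v := by
    intro v
    have hlin : HasDerivAt (fun v : ℝ => (1 - (v : ℂ))) (-1) v := by
      simpa using (Complex.ofRealCLM.hasDerivAt (x := v)).const_sub 1
    have h := ((hlin.mul (hasDeriv_exp_mul a v)).div_const a).add
      ((hasDeriv_exp_mul a v).div_const (a ^ 2))
    refine h.congr_deriv ?_
    field_simp
    ring
  have hc : Continuous fun v : ℝ => Complex.exp (a * v) * (1 - (v : ℂ)) :=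
    (cont_exp_mul a).mul (continuous_const.sub Complex.continuous_ofReal)
  rw [intervalIntegral.integral_eq_sub_of_hasDerivAt (fun v _ => hF v)
    (hc.intervalIntegrable _ _)]
  push_cast
  field_simp
  simp only [mul_zero, zero_mul, Complex.exp_zero]
  ring

lemma int10 (a : ℂ) (ha : a ≠ 0) :
    (∫ v in (-1 : ℝ)..0, Complex.exp (a * v) * (1 + (v : ℂ)))
      = 1 / a - 1 / a ^ 2 + Complex.exp (-a) / a ^ 2 := by
  have hF : ∀ v : ℝ, HasDerivAt
      (fun v : ℝ => (1 + (v : ℂ)) * Complex.exp (a * v) / a - Complex.exp (a * v) / a ^ 2)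
      (Complex.exp (a * v) * (1 + (v : ℂ))) v := by
    intro v
    have hlin : HasDerivAt (fun v : ℝ => (1 + (v : ℂ))) 1 v := by
      simpa using (Complex.ofRealCLM.hasDerivAt (x := v)).const_add 1
    have h := ((hlin.mul (hasDeriv_exp_mul a v)).div_const a).sub
      ((hasDeriv_exp_mul a v).div_const (a ^ 2))
    refine h.congr_deriv ?_
    field_simp
    ring
  have hc : Continuous fun v : ℝ => Complex.exp (a * v) * (1 + (v : ℂ)) :=
    (cont_exp_mul a).mul (continuous_const.add Complex.continuous_ofReal)
  rw [intervalIntegral.integral_eq_sub_of_hasDerivAt (fun v _ => hF v)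
    (hc.intervalIntegrable _ _)]
  have : Complex.exp (a * (-1 : ℝ)) = Complex.exp (-a) := by norm_num
  rw [this]
  push_cast
  field_simp
  simp only [mul_zero, zero_mul, Complex.exp_zero]
  ring


lemma fejerTri_fourier (ξ : ℝ) (hξ : ξ ≠ 0) :
    𝓕 fejerTri ξ = (((Real.sin (π * ξ) / (π * ξ)) ^ 2 : ℝ) : ℂ) := by
  have hπ : (π : ℝ) ≠ 0 := Real.pi_ne_zero
  have hx0 : (-(2 * π * ξ) : ℝ) ≠ 0 := by simp only [neg_ne_zero]; positivity
  have ha0 : ((-(2 * π * ξ) : ℝ) : ℂ) * Complex.I ≠ 0 :=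
    mul_ne_zero (Complex.ofReal_ne_zero.2 hx0) Complex.I_ne_zero
  set a : ℂ := ((-(2 * π * ξ) : ℝ) : ℂ) * Complex.I with ha
  have step1 : 𝓕 fejerTri ξ = ∫ v : ℝ, Complex.exp (a * v) * fejerTri v := by
    rw [Real.fourier_real_eq_integral_exp_smul]
    congr 1; ext v
    rw [smul_eq_mul, ha]
    norm_cast
    push_cast
    ring_nf
  have step2 : (∫ v : ℝ, Complex.exp (a * v) * fejerTri v)
      = ∫ v in (-1 : ℝ)..1, Complex.exp (a * v) * fejerTri v := by
    rw [integral_eq_integral_of_support_subset]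
    intro v hv
    simp only [Function.mem_support, ne_eq, mul_eq_zero, not_or] at hv
    by_contra hmem
    refine hv.2 (fejerTri_eq_zero ?_)
    simp only [Set.mem_Ioc, not_and_or, not_lt, not_le] at hmem
    rcases hmem with h | h
    · rw [abs_of_nonpos (by linarith)]; linarith
    · rw [abs_of_pos (by linarith)]; linarith
  have contT : Continuous fejerTri :=
    Complex.continuous_ofReal.comp (continuous_const.max
      (continuous_const.sub (_root_.continuous_abs)))
  have cont : Continuous fun v : ℝ => Complex.exp (a * v) * fejerTri v :=
    (cont_exp_mul a).mul contT
  have split : (∫ v in (-1 : ℝ)..1, Complex.exp (a * v) * fejerTri v)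
      = (∫ v in (-1 : ℝ)..0, Complex.exp (a * v) * fejerTri v)
        + ∫ v in (0 : ℝ)..1, Complex.exp (a * v) * fejerTri v := by
    rw [integral_add_adjacent_intervals] <;> exact cont.intervalIntegrable _ _
  have heq1 : EqOn (fun v : ℝ => Complex.exp (a * v) * fejerTri v)
      (fun v : ℝ => Complex.exp (a * v) * (1 - (v : ℂ))) (Set.uIcc (0 : ℝ) 1) := by
    intro v hv
    rw [Set.uIcc_of_le (by norm_num)] at hv
    simp only [fejerTri]
    rw [abs_of_nonneg hv.1, max_eq_right (by linarith [hv.2])]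
    push_cast; ring
  have heq2 : EqOn (fun v : ℝ => Complex.exp (a * v) * fejerTri v)
      (fun v : ℝ => Complex.exp (a * v) * (1 + (v : ℂ))) (Set.uIcc (-1 : ℝ) 0) := by
    intro v hv
    rw [Set.uIcc_of_le (by norm_num)] at hv
    simp only [fejerTri]
    rw [abs_of_nonpos hv.2, max_eq_right (by linarith [hv.1])]
    push_cast; ring
  rw [step1, step2, split, intervalIntegral.integral_congr heq1,
    intervalIntegral.integral_congr heq2, int01 a ha0, int10 a ha0]
  have hexp : Complex.exp a + Complex.exp (-a) = 2 * ((Real.cos (2 * π * ξ) : ℝ) : ℂ) := by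
    rw [ha, show -((((-(2 * π * ξ) : ℝ)) : ℂ) * Complex.I) = (((2 * π * ξ : ℝ)) : ℂ) * Complex.I by
      push_cast; ring, Complex.exp_mul_I, Complex.exp_mul_I]
    push_cast
    simp only [Complex.cos_neg, Complex.sin_neg, ← Complex.ofReal_cos, ← Complex.ofReal_sin]
    push_cast
    ring
  have ha2 : a ^ 2 = -(((2 * π * ξ) ^ 2 : ℝ) : ℂ) := by
    rw [ha, mul_pow, Complex.I_sq]
    push_cast; ring
  have hπξ : (π * ξ) ≠ 0 := mul_ne_zero hπ hξ
  have hreal : ((Real.sin (π * ξ) / (π * ξ)) ^ 2 : ℝ)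
      = (2 - 2 * Real.cos (2 * π * ξ)) / (2 * π * ξ) ^ 2 := by
    have h2 : Real.sin (π * ξ) ^ 2 = 1 / 2 - Real.cos (2 * (π * ξ)) / 2 :=
      Real.sin_sq_eq_half_sub (π * ξ)
    rw [div_pow, h2, ← mul_assoc]
    field_simp
  have habs : ∀ b : ℂ, b ≠ 0 → 1 / b - 1 / b ^ 2 + Complex.exp (-b) / b ^ 2
      + (Complex.exp b / b ^ 2 - 1 / b - 1 / b ^ 2)
      = (Complex.exp b + Complex.exp (-b) - 2) / b ^ 2 := by
    intro b _
    ring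
  calc 1 / a - 1 / a ^ 2 + Complex.exp (-a) / a ^ 2
        + (Complex.exp a / a ^ 2 - 1 / a - 1 / a ^ 2)
      = (Complex.exp a + Complex.exp (-a) - 2) / a ^ 2 := habs a ha0
    _ = (2 * ((Real.cos (2 * π * ξ) : ℝ) : ℂ) - 2) / (-(((2 * π * ξ) ^ 2 : ℝ) : ℂ)) := by
        rw [hexp, ha2]
    _ = (((Real.sin (π * ξ) / (π * ξ)) ^ 2 : ℝ) : ℂ) := by
        rw [hreal]
        push_cast
        ring


lemma sinc2_nonneg (t : ℝ) : 0 ≤ (Real.sin (t / 2) / t) ^ 2 := sq_nonneg _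

lemma sinc2_bound (t : ℝ) : (Real.sin (t / 2) / t) ^ 2 ≤ 2 * (1 + t ^ 2)⁻¹ := by
  rcases eq_or_ne t 0 with rfl | ht
  · norm_num
  · have ht2 : (0 : ℝ) < t ^ 2 := by positivity
    have h12 : (0 : ℝ) < 1 + t ^ 2 := by positivity
    rw [div_pow, show (2 : ℝ) * (1 + t ^ 2)⁻¹ = 2 / (1 + t ^ 2) by ring,
      div_le_div_iff₀ ht2 h12]
    have h1 : Real.sin (t / 2) ^ 2 ≤ (t / 2) ^ 2 := Real.sin_sq_le_sq
    have h2 : Real.sin (t / 2) ^ 2 ≤ 1 := Real.sin_sq_le_one _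
    nlinarith [sq_nonneg t, sq_nonneg (Real.sin (t / 2)),
      mul_le_mul_of_nonneg_right h2 (sq_nonneg t)]

lemma sinc2_meas : AEStronglyMeasurable (fun t : ℝ => (Real.sin (t / 2) / t) ^ 2) volume := by
  apply Measurable.aestronglyMeasurable
  fun_prop

lemma sinc2_integrable : Integrable (fun t : ℝ => (Real.sin (t / 2) / t) ^ 2) := by
  apply Integrable.mono' ((integrable_inv_one_add_sq).const_mul 2) sinc2_meas
  filter_upwards with t
  rw [Real.norm_eq_abs, abs_of_nonneg (sinc2_nonneg t)]
  exact sinc2_bound t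

lemma S_integrable : Integrable (fun v : ℝ => (Real.sin (π * v) / (π * v)) ^ 2) := by
  have h2π : (2 * π : ℝ) ≠ 0 := by positivity
  have h := (sinc2_integrable.comp_mul_left' h2π).const_mul 4
  apply h.congr
  filter_upwards with v
  rcases eq_or_ne v 0 with rfl | hv
  · norm_num
  · have hπv : π * v ≠ 0 := mul_ne_zero Real.pi_ne_zero hv
    have : (2 * π * v) / 2 = π * v := by ring
    rw [this, div_pow, div_pow]
    field_simp
    ring

lemma fourier_fejerTri_integrable : Integrable (𝓕 fejerTri) := by
  apply (S_integrable.ofReal (𝕜 := ℂ)).congr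
  filter_upwards [compl_mem_ae_iff.2 (measure_singleton (0 : ℝ))] with v hv
  exact (fejerTri_fourier v (by simpa using hv)).symm

lemma fejer_key (β : ℝ) :
    (∫ u : ℝ, Complex.exp (((u * β : ℝ) : ℂ) * Complex.I) * (((Real.sin (u / 2) / u) ^ 2 : ℝ) : ℂ))
      = (((π / 2) * max 0 (1 - |β|) : ℝ) : ℂ) := by
  have hinv : 𝓕⁻ (𝓕 fejerTri) β = fejerTri β :=
    fejerTri_integrable.fourierInv_fourier_eq fourier_fejerTri_integrable
      fejerTri_continuous.continuousAt
  rw [Real.fourierInv_eq_fourier_neg,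
    Real.fourier_real_eq_integral_exp_smul] at hinv
  have h1 : (∫ v : ℝ, Complex.exp (((2 * π * v * β : ℝ) : ℂ) * Complex.I)
      * (((Real.sin (π * v) / (π * v)) ^ 2 : ℝ) : ℂ)) = fejerTri β := by
    rw [← hinv]
    apply MeasureTheory.integral_congr_ae
    filter_upwards [compl_mem_ae_iff.2 (measure_singleton (0 : ℝ))] with v hv
    rw [fejerTri_fourier v (by simpa using hv), smul_eq_mul]
    congr 2
    push_cast
    ring
  set F : ℝ → ℂ := fun v => Complex.exp (((2 * π * v * β : ℝ) : ℂ) * Complex.I)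
      * (((Real.sin (π * v) / (π * v)) ^ 2 : ℝ) : ℂ) with hF
  have h2 := MeasureTheory.Measure.integral_comp_div F (2 * π)
  have h3 : ∀ u : ℝ, F (u / (2 * π)) = 4 * (Complex.exp (((u * β : ℝ) : ℂ) * Complex.I)
      * (((Real.sin (u / 2) / u) ^ 2 : ℝ) : ℂ)) := by
    intro u
    have h2π : (2 * π : ℝ) ≠ 0 := by positivity
    have e1 : 2 * π * (u / (2 * π)) * β = u * β := by field_simp
    have e2 : π * (u / (2 * π)) = u / 2 := by field_simp
    have e3 : ((Real.sin (u / 2) / (u / 2)) ^ 2 : ℝ) = 4 * (Real.sin (u / 2) / u) ^ 2 := by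
      rcases eq_or_ne u 0 with rfl | hu
      · norm_num
      · rw [div_pow, div_pow]; field_simp; ring
    rw [hF]
    simp only [e1, e2, e3]
    push_cast
    ring
  rw [funext h3, MeasureTheory.integral_const_mul] at h2
  have hpos : |2 * π| = 2 * π := abs_of_pos (by positivity)
  rw [h1, hpos] at h2
  have : fejerTri β = ((max 0 (1 - |β|) : ℝ) : ℂ) := rfl
  rw [this, Complex.real_smul] at h2
  apply mul_left_cancel₀ (show (4 : ℂ) ≠ 0 by norm_num)
  rw [h2]
  push_cast
  ring




lemma Fc_integrable (β : ℝ) : Integrable (fun u : ℝ =>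
    Complex.exp (((u * β : ℝ) : ℂ) * Complex.I) * (((Real.sin (u / 2) / u) ^ 2 : ℝ) : ℂ)) := by
  apply Integrable.bdd_mul (c := 1) (sinc2_integrable.ofReal (𝕜 := ℂ))
  · exact (Complex.continuous_exp.comp ((Complex.continuous_ofReal.comp
      (continuous_id.mul continuous_const)).mul continuous_const)).aestronglyMeasurable
  · exact ae_of_all _ fun u => le_of_eq (Complex.norm_exp_ofReal_mul_I _)

lemma intA : (∫ u : ℝ, (Real.sin (u / 2) / u) ^ 2) = π / 2 := by
  have h := fejer_key 0
  simp only [mul_zero, Complex.ofReal_zero, zero_mul, Complex.exp_zero, one_mul, abs_zero,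
    sub_zero, max_eq_right (zero_le_one)] at h
  have h2 : ((∫ u : ℝ, (Real.sin (u / 2) / u) ^ 2 : ℝ) : ℂ) = ((π / 2 * 1 : ℝ) : ℂ) := by
    rw [← h]
    exact (_root_.integral_ofReal (𝕜 := ℂ)).symm
  have h3 := Complex.ofReal_inj.1 h2
  linarith [h3]

lemma intB (β : ℝ) (hβ : 1 ≤ |β|) :
    (∫ u : ℝ, (Real.sin (u / 2) / u) ^ 2 * Real.cos (u * β)) = 0 := by
  have h := fejer_key β
  have hmax : max 0 (1 - |β|) = 0 := max_eq_left (by linarith)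
  rw [hmax, mul_zero, Complex.ofReal_zero] at h
  have h2 := _root_.integral_re (Fc_integrable β)
  simp only [RCLike.re_to_complex] at h2
  rw [h, Complex.zero_re] at h2
  rw [← h2]
  apply MeasureTheory.integral_congr_ae
  filter_upwards with u
  simp only [Complex.mul_re, Complex.exp_ofReal_mul_I_re, Complex.exp_ofReal_mul_I_im,
    Complex.ofReal_re, Complex.ofReal_im, mul_zero, zero_mul, sub_zero, add_zero]
  ring

lemma intC (β : ℝ) (hβ : 1 ≤ |β|) :
    (∫ u : ℝ, (Real.sin (u / 2) / u) ^ 2 * Real.sin (u * β)) = 0 := by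
  have h := fejer_key β
  have hmax : max 0 (1 - |β|) = 0 := max_eq_left (by linarith)
  rw [hmax, mul_zero, Complex.ofReal_zero] at h
  have h2 := _root_.integral_im (Fc_integrable β)
  simp only [RCLike.im_to_complex] at h2
  rw [h, Complex.zero_im] at h2
  rw [← h2]
  apply MeasureTheory.integral_congr_ae
  filter_upwards with u
  simp only [Complex.mul_im, Complex.exp_ofReal_mul_I_re, Complex.exp_ofReal_mul_I_im,
    Complex.ofReal_re, Complex.ofReal_im, mul_zero, zero_mul, sub_zero, add_zero, zero_add]
  ring

lemma cos_integrable (β : ℝ) :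
    Integrable (fun u : ℝ => (Real.sin (u / 2) / u) ^ 2 * Real.cos (u * β)) := by
  apply Integrable.mono' sinc2_integrable
  · exact (Measurable.aestronglyMeasurable (by fun_prop))
  · filter_upwards with u
    rw [Real.norm_eq_abs, abs_mul, abs_of_nonneg (sinc2_nonneg u)]
    exact mul_le_of_le_one_right (sinc2_nonneg u) (abs_cos_le_one _)

lemma sin_integrable (β : ℝ) :
    Integrable (fun u : ℝ => (Real.sin (u / 2) / u) ^ 2 * Real.sin (u * β)) := by
  apply Integrable.mono' sinc2_integrable
  · exact (Measurable.aestronglyMeasurable (by fun_prop))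
  · filter_upwards with u
    rw [Real.norm_eq_abs, abs_mul, abs_of_nonneg (sinc2_nonneg u)]
    exact mul_le_of_le_one_right (sinc2_nonneg u) (abs_sin_le_one _)

lemma main_integrable (θ β : ℝ) :
    Integrable (fun t : ℝ => (Real.sin (t / 2) / t) ^ 2 * (1 + Real.cos (θ + β * t))) := by
  apply Integrable.mono' (sinc2_integrable.const_mul 2)
  · exact (Measurable.aestronglyMeasurable (by fun_prop))
  · filter_upwards with t
    have h1 : 0 ≤ 1 + Real.cos (θ + β * t) := by linarith [Real.neg_one_le_cos (θ + β * t)]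
    have h2 : 1 + Real.cos (θ + β * t) ≤ 2 := by linarith [Real.cos_le_one (θ + β * t)]
    rw [Real.norm_eq_abs, abs_mul, abs_of_nonneg (sinc2_nonneg t), abs_of_nonneg h1]
    calc (Real.sin (t / 2) / t) ^ 2 * (1 + Real.cos (θ + β * t))
        ≤ (Real.sin (t / 2) / t) ^ 2 * 2 := mul_le_mul_of_nonneg_left h2 (sinc2_nonneg t)
      _ = 2 * (Real.sin (t / 2) / t) ^ 2 := by ring

lemma main_value (θ β : ℝ) (hβ : 1 ≤ |β|) :
    (∫ t : ℝ, (Real.sin (t / 2) / t) ^ 2 * (1 + Real.cos (θ + β * t))) = π / 2 := by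
  have expand : (fun t : ℝ => (Real.sin (t / 2) / t) ^ 2 * (1 + Real.cos (θ + β * t)))
      = fun t : ℝ => (Real.sin (t / 2) / t) ^ 2
        + (Real.cos θ * ((Real.sin (t / 2) / t) ^ 2 * Real.cos (t * β))
          - Real.sin θ * ((Real.sin (t / 2) / t) ^ 2 * Real.sin (t * β))) := by
    funext t
    rw [Real.cos_add, mul_comm β t]
    ring
  have hc : Integrable (fun t : ℝ =>
      Real.cos θ * ((Real.sin (t / 2) / t) ^ 2 * Real.cos (t * β))) :=
    (cos_integrable β).const_mul _
  have hs : Integrable (fun t : ℝ =>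
      Real.sin θ * ((Real.sin (t / 2) / t) ^ 2 * Real.sin (t * β))) :=
    (sin_integrable β).const_mul _
  have hcs : Integrable (fun t : ℝ =>
      Real.cos θ * ((Real.sin (t / 2) / t) ^ 2 * Real.cos (t * β))
        - Real.sin θ * ((Real.sin (t / 2) / t) ^ 2 * Real.sin (t * β))) := hc.sub hs
  rw [expand, MeasureTheory.integral_add sinc2_integrable hcs,
    MeasureTheory.integral_sub hc hs,
    MeasureTheory.integral_const_mul, MeasureTheory.integral_const_mul, intA, intB β hβ, intC β hβ]
  ring

/-- The Fejér-type integral bound `∫_{-τ}^{τ} (sin(t/2)/t)² (1 + cos(θ + βt)) dt ≤ π/2`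
for `|β| ≥ 1`. (The integrand's removable singularity at `t = 0` is a measure-zero
point, so it does not affect the value of the integral.) -/
theorem fejer_integral_bound (θ β τ : ℝ) (hβ : 1 ≤ |β|) (hτ : 0 < τ) :
    ∫ t in (-τ)..τ, (Real.sin (t / 2) / t) ^ 2 * (1 + Real.cos (θ + β * t)) ≤ π / 2 := by
  rw [intervalIntegral.integral_of_le (by linarith : -τ ≤ τ)]
  rw [← main_value θ β hβ]
  apply setIntegral_le_integral (main_integrable θ β)
  filter_upwards with t
  have h1 : 0 ≤ 1 + Real.cos (θ + β * t) := by linarith [Real.neg_one_le_cos (θ + β * t)]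
  exact mul_nonneg (sinc2_nonneg t) h1
end

section
/- Let P be a finite set of primes, let σ₀ and t be real numbers, let a : P → ℂ, let θ : P → ℝ, and let w : P → [0, 1]. Then |∑_{p ∈ P} a(p)·w_p·e^{−2πi θ_p}/p^{σ₀} − ∑_{p ∈ P} a(p)·w_p/p^{σ₀ + it}| ≤ 2π·(∑_{p ∈ P} |a(p)|²·w_p/p^{σ₀})^{1/2}·(∑_{p ∈ P} p^{−σ₀}·‖θ_p − t·log p/(2π)‖²)^{1/2}. -/
open Real Finset

/-- Distance from a real number to the nearest integer. -/
noncomputable def distNearestInt (x : ℝ) : ℝ := |x - round x|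

lemma norm_exp_mul_I_sub_one (y : ℝ) :
    ‖Complex.exp ((y : ℂ) * Complex.I) - 1‖ = 2 * |Real.sin (y / 2)| := by
  have h : Complex.exp ((y : ℂ) * Complex.I) - 1 =
      ((Real.cos y - 1 : ℝ) : ℂ) + ((Real.sin y : ℝ) : ℂ) * Complex.I := by
    rw [Complex.exp_mul_I]
    push_cast
    ring
  rw [h, Complex.norm_add_mul_I]
  rw [Real.abs_sin_half]
  have h2 : (Real.cos y - 1) ^ 2 + Real.sin y ^ 2 = 2 ^ 2 * ((1 - Real.cos y) / 2) := by
    nlinarith [Real.sin_sq_add_cos_sq y]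
  rw [h2, Real.sqrt_mul (by positivity), Real.sqrt_sq (by norm_num)]

lemma norm_exp_neg_two_pi_mul_I_sub_one (x : ℝ) :
    ‖Complex.exp (((-2 * π * x : ℝ) : ℂ) * Complex.I) - 1‖ ≤ 2 * π * distNearestInt x := by
  rw [norm_exp_mul_I_sub_one]
  have h1 : (-2 * π * x) / 2 = -(π * x) := by ring
  rw [h1, Real.sin_neg, abs_neg]
  have h2 : |Real.sin (π * x)| = |Real.sin (π * (x - round x))| := by
    rw [show π * (x - (round x : ℝ)) = π * x - (round x : ℝ) * π by ring,
      Real.sin_sub_int_mul_pi, abs_mul]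
    rcases Int.even_or_odd (round x) with h | h
    · rw [h.neg_one_zpow, abs_one, one_mul]
    · rw [h.neg_one_zpow, abs_neg, abs_one, one_mul]
  rw [h2]
  have h3 : |Real.sin (π * (x - round x))| ≤ |π * (x - round x)| := Real.abs_sin_le_abs
  have h4 : |π * (x - (round x : ℝ))| = π * |x - (round x : ℝ)| := by
    rw [abs_mul, abs_of_pos Real.pi_pos]
  calc 2 * |Real.sin (π * (x - round x))| ≤ 2 * (π * |x - (round x : ℝ)|) := by
        rw [← h4]; linarith
    _ = 2 * π * distNearestInt x := by rw [distNearestInt]; ring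

/-- Cauchy–Schwarz step: comparing a twisted Dirichlet polynomial with its
randomized version. -/
theorem twisted_dirichlet_poly_compare (P : Finset ℕ) (hP : ∀ p ∈ P, p.Prime)
    (σ₀ t : ℝ) (a : ℕ → ℂ) (θ : ℕ → ℝ) (w : ℕ → ℝ)
    (hw : ∀ p ∈ P, w p ∈ Set.Icc (0 : ℝ) 1) :
    ‖(∑ p ∈ P, a p * (w p : ℂ) * Complex.exp (-2 * (π : ℂ) * Complex.I * (θ p : ℂ)) /
          (((p : ℝ) ^ σ₀ : ℝ) : ℂ)) -
        ∑ p ∈ P, a p * (w p : ℂ) / (p : ℂ) ^ ((σ₀ : ℂ) + (t : ℂ) * Complex.I)‖ ≤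
      2 * π * Real.sqrt (∑ p ∈ P, ‖a p‖ ^ 2 * w p / (p : ℝ) ^ σ₀) *
        Real.sqrt (∑ p ∈ P, (p : ℝ) ^ (-σ₀) *
          distNearestInt (θ p - t * Real.log p / (2 * π)) ^ 2) := by
  classical
  set d : ℕ → ℝ := fun p => distNearestInt (θ p - t * Real.log p / (2 * π)) with hd
  set f : ℕ → ℝ := fun p => ‖a p‖ * Real.sqrt (w p / (p : ℝ) ^ σ₀) with hf
  set g : ℕ → ℝ := fun p => Real.sqrt (w p / (p : ℝ) ^ σ₀) * d p with hg
  have key : ∀ p ∈ P,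
      ‖a p * (w p : ℂ) * Complex.exp (-2 * (π : ℂ) * Complex.I * (θ p : ℂ)) /
          (((p : ℝ) ^ σ₀ : ℝ) : ℂ) -
        a p * (w p : ℂ) / (p : ℂ) ^ ((σ₀ : ℂ) + (t : ℂ) * Complex.I)‖
        ≤ 2 * π * (f p * g p) := by
    intro p hp
    have hp0 : (0 : ℝ) < (p : ℝ) := by
      exact_mod_cast (hP p hp).pos
    have hw0 : 0 ≤ w p := (hw p hp).1
    have hC : (0 : ℝ) < (p : ℝ) ^ σ₀ := Real.rpow_pos_of_pos hp0 _
    have hCne : (((p : ℝ) ^ σ₀ : ℝ) : ℂ) ≠ 0 := by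
      exact_mod_cast hC.ne'
    -- cpow decomposition
    have hcpow : (p : ℂ) ^ ((σ₀ : ℂ) + (t : ℂ) * Complex.I) =
        (((p : ℝ) ^ σ₀ : ℝ) : ℂ) * Complex.exp (((t * Real.log p : ℝ) : ℂ) * Complex.I) := by
      rw [Complex.cpow_def_of_ne_zero (by exact_mod_cast hp0.ne')]
      have hlog : Complex.log (p : ℂ) = ((Real.log p : ℝ) : ℂ) := by
        rw [show ((p : ℕ) : ℂ) = (((p : ℝ) : ℝ) : ℂ) by push_cast; ring,
          ← Complex.ofReal_log hp0.le]
      rw [hlog]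
      have : ((Real.log p : ℝ) : ℂ) * ((σ₀ : ℂ) + (t : ℂ) * Complex.I) =
          ((σ₀ * Real.log p : ℝ) : ℂ) + ((t * Real.log p : ℝ) : ℂ) * Complex.I := by
        push_cast; ring
      rw [this, Complex.exp_add]
      congr 1
      rw [← Complex.ofReal_exp]
      norm_cast
      rw [Real.rpow_def_of_pos hp0]
      ring_nf
    set E : ℂ := Complex.exp (((-(t * Real.log p) : ℝ) : ℂ) * Complex.I) with hE
    set F : ℂ := Complex.exp (((t * Real.log p : ℝ) : ℂ) * Complex.I) with hF
    have hEF : E * F = 1 := by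
      rw [hE, hF, ← Complex.exp_add, ← Complex.exp_zero]
      congr 1
      push_cast
      ring
    have hFne : F ≠ 0 := Complex.exp_ne_zero _
    have hfact : a p * (w p : ℂ) * Complex.exp (-2 * (π : ℂ) * Complex.I * (θ p : ℂ)) /
          (((p : ℝ) ^ σ₀ : ℝ) : ℂ) -
        a p * (w p : ℂ) / (p : ℂ) ^ ((σ₀ : ℂ) + (t : ℂ) * Complex.I) =
        (a p * (w p : ℂ) / (((p : ℝ) ^ σ₀ : ℝ) : ℂ)) *
          (E * (Complex.exp (((-2 * π * (θ p - t * Real.log p / (2 * π)) : ℝ) : ℂ)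
            * Complex.I) - 1)) := by
      have hexp : E * Complex.exp (((-2 * π * (θ p - t * Real.log p / (2 * π)) : ℝ) : ℂ)
            * Complex.I) = Complex.exp (-2 * (π : ℂ) * Complex.I * (θ p : ℂ)) := by
        rw [hE, ← Complex.exp_add]
        congr 1
        have hπ : (π : ℝ) ≠ 0 := Real.pi_ne_zero
        have hr : (-2 * π * (θ p - t * Real.log p / (2 * π)) : ℝ)
            = -(2 * π * θ p) + t * Real.log p := by field_simp; ring
        rw [hr]
        push_cast
        ring
      have hEinv : E = F⁻¹ := eq_inv_of_mul_eq_one_left hEF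
      rw [hcpow, show E * (Complex.exp (((-2 * π * (θ p - t * Real.log p / (2 * π)) : ℝ) : ℂ)
            * Complex.I) - 1) = Complex.exp (-2 * (π : ℂ) * Complex.I * (θ p : ℂ)) - E by
          rw [mul_sub, mul_one, hexp], hEinv]
      field_simp
    rw [hfact]
    have hnorm : ‖(a p * (w p : ℂ) / (((p : ℝ) ^ σ₀ : ℝ) : ℂ)) *
          (E * (Complex.exp (((-2 * π * (θ p - t * Real.log p / (2 * π)) : ℝ) : ℂ)
            * Complex.I) - 1))‖ =
        ‖a p‖ * w p / ((p : ℝ) ^ σ₀) *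
          ‖Complex.exp (((-2 * π * (θ p - t * Real.log p / (2 * π)) : ℝ) : ℂ)
            * Complex.I) - 1‖ := by
      rw [norm_mul, norm_mul, norm_div, norm_mul, hE, Complex.norm_exp_ofReal_mul_I, one_mul,
        Complex.norm_real, Complex.norm_real, Real.norm_of_nonneg hw0,
        Real.norm_of_nonneg hC.le]
    rw [hnorm]
    have hb := norm_exp_neg_two_pi_mul_I_sub_one (θ p - t * Real.log p / (2 * π))
    have hfg : f p * g p = ‖a p‖ * w p / ((p : ℝ) ^ σ₀) * d p := by
      rw [hf, hg]
      have : Real.sqrt (w p / (p : ℝ) ^ σ₀) * Real.sqrt (w p / (p : ℝ) ^ σ₀)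
          = w p / (p : ℝ) ^ σ₀ := Real.mul_self_sqrt (by positivity)
      calc ‖a p‖ * Real.sqrt (w p / (p : ℝ) ^ σ₀) * (Real.sqrt (w p / (p : ℝ) ^ σ₀) * d p)
          = ‖a p‖ * (Real.sqrt (w p / (p : ℝ) ^ σ₀) * Real.sqrt (w p / (p : ℝ) ^ σ₀)) * d p := by
            ring
        _ = ‖a p‖ * (w p / (p : ℝ) ^ σ₀) * d p := by rw [this]
        _ = ‖a p‖ * w p / ((p : ℝ) ^ σ₀) * d p := by ring
    rw [hfg]
    have hnn : 0 ≤ ‖a p‖ * w p / ((p : ℝ) ^ σ₀) := by positivity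
    calc ‖a p‖ * w p / ((p : ℝ) ^ σ₀) *
          ‖Complex.exp (((-2 * π * (θ p - t * Real.log p / (2 * π)) : ℝ) : ℂ)
            * Complex.I) - 1‖
        ≤ ‖a p‖ * w p / ((p : ℝ) ^ σ₀) * (2 * π * d p) := by
          exact mul_le_mul_of_nonneg_left hb hnn
      _ = 2 * π * (‖a p‖ * w p / ((p : ℝ) ^ σ₀) * d p) := by ring
  -- sum up
  have step1 : ‖(∑ p ∈ P, a p * (w p : ℂ) * Complex.exp (-2 * (π : ℂ) * Complex.I * (θ p : ℂ)) /
          (((p : ℝ) ^ σ₀ : ℝ) : ℂ)) -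
        ∑ p ∈ P, a p * (w p : ℂ) / (p : ℂ) ^ ((σ₀ : ℂ) + (t : ℂ) * Complex.I)‖
      ≤ ∑ p ∈ P, 2 * π * (f p * g p) := by
    rw [← Finset.sum_sub_distrib]
    exact (norm_sum_le _ _).trans (Finset.sum_le_sum key)
  have step2 : ∑ p ∈ P, 2 * π * (f p * g p) = 2 * π * ∑ p ∈ P, f p * g p := by
    rw [Finset.mul_sum]
  have step3 : ∑ p ∈ P, f p * g p ≤
      Real.sqrt (∑ p ∈ P, f p ^ 2) * Real.sqrt (∑ p ∈ P, g p ^ 2) :=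
    Real.sum_mul_le_sqrt_mul_sqrt _ _ _
  have hA : ∑ p ∈ P, f p ^ 2 = ∑ p ∈ P, ‖a p‖ ^ 2 * w p / (p : ℝ) ^ σ₀ := by
    apply Finset.sum_congr rfl
    intro p hp
    have hp0 : (0 : ℝ) < (p : ℝ) := by exact_mod_cast (hP p hp).pos
    have hw0 : 0 ≤ w p := (hw p hp).1
    have hC : (0 : ℝ) < (p : ℝ) ^ σ₀ := Real.rpow_pos_of_pos hp0 _
    rw [hf, mul_pow, Real.sq_sqrt (by positivity)]
    ring
  have hB : ∑ p ∈ P, g p ^ 2 ≤ ∑ p ∈ P, (p : ℝ) ^ (-σ₀) *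
      distNearestInt (θ p - t * Real.log p / (2 * π)) ^ 2 := by
    apply Finset.sum_le_sum
    intro p hp
    have hp0 : (0 : ℝ) < (p : ℝ) := by exact_mod_cast (hP p hp).pos
    have hw0 : 0 ≤ w p := (hw p hp).1
    have hw1 : w p ≤ 1 := (hw p hp).2
    have hC : (0 : ℝ) < (p : ℝ) ^ σ₀ := Real.rpow_pos_of_pos hp0 _
    rw [hg, mul_pow, Real.sq_sqrt (by positivity), Real.rpow_neg hp0.le]
    have hdp : (d p) ^ 2 = distNearestInt (θ p - t * Real.log p / (2 * π)) ^ 2 := by rw [hd]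
    rw [hdp]
    have : w p / (p : ℝ) ^ σ₀ ≤ ((p : ℝ) ^ σ₀)⁻¹ := by
      rw [div_le_iff₀ hC, inv_mul_cancel₀ hC.ne']
      exact hw1
    exact mul_le_mul_of_nonneg_right this (sq_nonneg _)
  have hsqrtB : Real.sqrt (∑ p ∈ P, g p ^ 2) ≤
      Real.sqrt (∑ p ∈ P, (p : ℝ) ^ (-σ₀) *
        distNearestInt (θ p - t * Real.log p / (2 * π)) ^ 2) :=
    Real.sqrt_le_sqrt hB
  calc ‖(∑ p ∈ P, a p * (w p : ℂ) * Complex.exp (-2 * (π : ℂ) * Complex.I * (θ p : ℂ)) /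
          (((p : ℝ) ^ σ₀ : ℝ) : ℂ)) -
        ∑ p ∈ P, a p * (w p : ℂ) / (p : ℂ) ^ ((σ₀ : ℂ) + (t : ℂ) * Complex.I)‖
      ≤ 2 * π * ∑ p ∈ P, f p * g p := by rw [← step2]; exact step1
    _ ≤ 2 * π * (Real.sqrt (∑ p ∈ P, f p ^ 2) * Real.sqrt (∑ p ∈ P, g p ^ 2)) := by
        have h2π : (0 : ℝ) ≤ 2 * π := by positivity
        exact mul_le_mul_of_nonneg_left step3 h2π
    _ = 2 * π * Real.sqrt (∑ p ∈ P, f p ^ 2) * Real.sqrt (∑ p ∈ P, g p ^ 2) := by ring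
    _ ≤ 2 * π * Real.sqrt (∑ p ∈ P, f p ^ 2) *
        Real.sqrt (∑ p ∈ P, (p : ℝ) ^ (-σ₀) *
          distNearestInt (θ p - t * Real.log p / (2 * π)) ^ 2) :=
        mul_le_mul_of_nonneg_left hsqrtB (by positivity)
    _ = 2 * π * Real.sqrt (∑ p ∈ P, ‖a p‖ ^ 2 * w p / (p : ℝ) ^ σ₀) *
        Real.sqrt (∑ p ∈ P, (p : ℝ) ^ (-σ₀) *
          distNearestInt (θ p - t * Real.log p / (2 * π)) ^ 2) := by rw [hA]
end

section
/- Let P be a finite set, let k be a positive integer, let c_j : P → ℂ for j = 1, …, k, and let b_1, …, b_k ∈ ℂ. If there exists z : P → ℂ with |z_p| ≤ 1 for all p ∈ P such that ∑_{p ∈ P} c_j(p)·z_p = b_j for every j = 1, …, k, then there exists z′ : P → ℂ with |z′_p| ≤ 1 for all p ∈ P, ∑_{p ∈ P} c_j(p)·z′_p = b_j for every j = 1, …, k, and such that the strict inequality |z′_p| < 1 holds for at most k + 1 elements p of P. -/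
open Finset

open scoped Classical in
private theorem polydisc_aux {α : Type*} (P : Finset α) (k : ℕ)
    (c : Fin k → α → ℂ) (b : Fin k → ℂ) :
    ∀ n : ℕ, ∀ z : α → ℂ, (P.filter fun p => ‖z p‖ < 1).card ≤ n →
      (∀ p ∈ P, ‖z p‖ ≤ 1) → (∀ j, ∑ p ∈ P, c j p * z p = b j) →
      ∃ z' : α → ℂ, (∀ p ∈ P, ‖z' p‖ ≤ 1) ∧ (∀ j, ∑ p ∈ P, c j p * z' p = b j) ∧
        (P.filter fun p => ‖z' p‖ < 1).card ≤ k := by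
  intro n
  induction n with
  | zero =>
    intro z hcard hz hsum
    exact ⟨z, hz, hsum, by omega⟩
  | succ m ih =>
    intro z hcard hz hsum
    by_cases hle : (P.filter fun p => ‖z p‖ < 1).card ≤ k
    · exact ⟨z, hz, hsum, hle⟩
    push_neg at hle
    set S : Finset α := P.filter fun p => ‖z p‖ < 1 with hSdef
    have hkS : k < S.card := hle
    -- a nonzero kernel vector of the map (S → ℂ) → (Fin k → ℂ)
    let L : ({x // x ∈ S} → ℂ) →ₗ[ℂ] (Fin k → ℂ) :=
      { toFun := fun w j => ∑ p : {x // x ∈ S}, c j p * w p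
        map_add' := by
          intro w w'; funext j
          simp [mul_add, Finset.sum_add_distrib]
        map_smul' := by
          intro a w; funext j
          simp [Finset.mul_sum, mul_left_comm] }
    have hnotinj : ¬ Function.Injective L := by
      intro hinj
      have := LinearMap.finrank_le_finrank_of_injective hinj
      rw [Module.finrank_fintype_fun_eq_card, Module.finrank_fintype_fun_eq_card,
        Fintype.card_coe, Fintype.card_fin] at this
      omega
    have hker : ∃ w : {x // x ∈ S} → ℂ, w ≠ 0 ∧ L w = 0 := by
      rw [← LinearMap.ker_eq_bot] at hnotinj
      rcases Submodule.ne_bot_iff _ |>.mp hnotinj with ⟨w, hw0, hwne⟩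
      exact ⟨w, hwne, hw0⟩
    obtain ⟨w, hwne, hw0⟩ := hker
    -- extend to v : α → ℂ supported on S
    let v : α → ℂ := fun p => if h : p ∈ S then w ⟨p, h⟩ else 0
    have hv_mem : ∀ p (h : p ∈ S), v p = w ⟨p, h⟩ := fun p h => dif_pos h
    have hv_not : ∀ p, p ∉ S → v p = 0 := fun p h => dif_neg h
    have hvsum : ∀ j, ∑ p ∈ P, c j p * v p = 0 := by
      intro j
      have h1 : ∑ p ∈ P, c j p * v p = ∑ p ∈ S, c j p * v p := by
        refine (Finset.sum_subset (Finset.filter_subset _ _) ?_).symm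
        intro p hp hpS
        rw [hv_not p hpS, mul_zero]
      have h2 : ∑ p ∈ S, c j p * v p = ∑ p : {x // x ∈ S}, c j p * v p :=
        (Finset.sum_coe_sort S (fun p => c j p * v p)).symm
      have h3 : ∑ p : {x // x ∈ S}, c j p * v p = L w j := by
        apply Finset.sum_congr rfl
        intro p _
        rw [hv_mem p.1 p.2]
      rw [h1, h2, h3, hw0]; rfl
    have hvne : ∃ p₀ ∈ S, v p₀ ≠ 0 := by
      by_contra hc
      push_neg at hc
      apply hwne
      funext p
      have := hc p.1 p.2
      rwa [hv_mem p.1 p.2] at this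
    obtain ⟨p₀, hp₀S, hvp₀⟩ := hvne
    -- the set of admissible times
    set T : Set ℝ := {t : ℝ | 0 ≤ t ∧ ∀ p ∈ S, ‖z p + (t : ℂ) * v p‖ ≤ 1} with hTdef
    have hT0 : (0 : ℝ) ∈ T := by
      refine ⟨le_refl 0, ?_⟩
      intro p hp
      simp only [Complex.ofReal_zero, zero_mul, add_zero]
      exact le_of_lt (Finset.mem_filter.mp hp).2
    have hTbdd : BddAbove T := by
      refine ⟨2 / ‖v p₀‖, ?_⟩
      intro t ht
      have h1 : ‖z p₀ + (t : ℂ) * v p₀‖ ≤ 1 := ht.2 p₀ hp₀S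
      have h2 : ‖(t : ℂ) * v p₀‖ ≤ 2 := by
        calc ‖(t : ℂ) * v p₀‖ = ‖z p₀ + (t : ℂ) * v p₀ - z p₀‖ := by ring_nf
          _ ≤ ‖z p₀ + (t : ℂ) * v p₀‖ + ‖z p₀‖ := norm_sub_le _ _
          _ ≤ 1 + 1 := add_le_add h1 (hz p₀ (Finset.mem_filter.mp hp₀S).1)
          _ = 2 := by norm_num
      have h3 : t * ‖v p₀‖ ≤ 2 := by
        have he : ‖(t : ℂ) * v p₀‖ = |t| * ‖v p₀‖ := by
          rw [norm_mul, Complex.norm_real, Real.norm_eq_abs]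
        rw [he, abs_of_nonneg ht.1] at h2
        exact h2
      rw [le_div_iff₀ (norm_pos_iff.mpr hvp₀)]
      exact h3
    have hcont : ∀ p : α, Continuous fun t : ℝ => ‖z p + (t : ℂ) * v p‖ := by
      intro p
      exact (continuous_const.add (Complex.continuous_ofReal.mul continuous_const)).norm
    have hTclosed : IsClosed T := by
      have hTeq : T = Set.Ici (0:ℝ) ∩ ⋂ p ∈ S, {t : ℝ | ‖z p + (t : ℂ) * v p‖ ≤ 1} := by
        ext t
        simp [hTdef, Set.mem_iInter]
      rw [hTeq]
      refine IsClosed.inter isClosed_Ici ?_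
      refine isClosed_biInter ?_
      intro p _
      exact isClosed_le (hcont p) continuous_const
    set t₀ : ℝ := sSup T with ht₀def
    have ht₀T : t₀ ∈ T := hTclosed.csSup_mem ⟨0, hT0⟩ hTbdd
    -- some coordinate in S hits the circle at t₀
    have hhit : ∃ q ∈ S, ‖z q + (t₀ : ℂ) * v q‖ = 1 := by
      by_contra hc
      push_neg at hc
      have hall : ∀ p ∈ S, ‖z p + (t₀ : ℂ) * v p‖ < 1 := by
        intro p hp
        exact lt_of_le_of_ne (ht₀T.2 p hp) (hc p hp)
      -- the open set of times where all are strict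
      set U : Set ℝ := ⋂ p ∈ S, {t : ℝ | ‖z p + (t : ℂ) * v p‖ < 1} with hUdef
      have hUopen : IsOpen U := by
        refine isOpen_biInter_finset ?_
        intro p _
        exact isOpen_lt (hcont p) continuous_const
      have ht₀U : t₀ ∈ U := by
        rw [hUdef]
        simp only [Set.mem_iInter]
        intro p hp
        exact hall p hp
      obtain ⟨ε, hε, hball⟩ := Metric.isOpen_iff.mp hUopen t₀ ht₀U
      have hmem : t₀ + ε / 2 ∈ T := by
        have hbm : t₀ + ε / 2 ∈ U := by
          apply hball
          simp [Real.dist_eq, abs_of_nonneg, hε.le]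
          linarith
        refine ⟨by linarith [ht₀T.1], ?_⟩
        intro p hp
        have := Set.mem_iInter.mp hbm p
        have := Set.mem_iInter.mp this hp
        exact le_of_lt this
      have := le_csSup hTbdd hmem
      linarith
    obtain ⟨q, hqS, hq1⟩ := hhit
    -- new solution
    set z' : α → ℂ := fun p => z p + (t₀ : ℂ) * v p with hz'def
    have hz'norm : ∀ p ∈ P, ‖z' p‖ ≤ 1 := by
      intro p hp
      by_cases hpS : p ∈ S
      · exact ht₀T.2 p hpS
      · rw [hz'def]
        simp only [hv_not p hpS, mul_zero, add_zero]
        exact hz p hp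
    have hz'sum : ∀ j, ∑ p ∈ P, c j p * z' p = b j := by
      intro j
      rw [hz'def]
      simp only [mul_add]
      rw [Finset.sum_add_distrib, hsum j]
      have : ∑ p ∈ P, c j p * ((t₀ : ℂ) * v p) = (t₀ : ℂ) * ∑ p ∈ P, c j p * v p := by
        rw [Finset.mul_sum]
        apply Finset.sum_congr rfl
        intro p _
        ring
      rw [this, hvsum j, mul_zero, add_zero]
    have hsubset : (P.filter fun p => ‖z' p‖ < 1) ⊆ S.erase q := by
      intro p hp
      rw [Finset.mem_filter] at hp
      have hpS : p ∈ S := by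
        by_contra hpS
        have : z' p = z p := by
          rw [hz'def]; simp [hv_not p hpS]
        rw [this] at hp
        exact hpS (Finset.mem_filter.mpr ⟨hp.1, hp.2⟩)
      refine Finset.mem_erase.mpr ⟨?_, hpS⟩
      intro hpq
      rw [hpq] at hp
      have : ‖z' q‖ = 1 := hq1
      linarith [hp.2, this.le, this.ge]
    have hcard' : (P.filter fun p => ‖z' p‖ < 1).card ≤ m := by
      have h1 := Finset.card_le_card hsubset
      have h2 : (S.erase q).card = S.card - 1 := Finset.card_erase_of_mem hqS
      omega
    exact ih z' hcard' hz'norm hz'sum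

open scoped Classical in
/-- Good's lemma: any solution of a linear system in the closed polydisc can be replaced
by one all but at most `k + 1` of whose coordinates lie on the unit circle. -/
theorem polydisc_solution_extreme {α : Type*} (P : Finset α) (k : ℕ) (hk : 0 < k)
    (c : Fin k → α → ℂ) (b : Fin k → ℂ)
    (h : ∃ z : α → ℂ, (∀ p ∈ P, ‖z p‖ ≤ 1) ∧ ∀ j, ∑ p ∈ P, c j p * z p = b j) :
    ∃ z' : α → ℂ, (∀ p ∈ P, ‖z' p‖ ≤ 1) ∧ (∀ j, ∑ p ∈ P, c j p * z' p = b j) ∧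
      (P.filter (fun p => ‖z' p‖ < 1)).card ≤ k + 1 := by
  obtain ⟨z, hz, hsum⟩ := h
  obtain ⟨z', h1, h2, h3⟩ := polydisc_aux P k c b
    (P.filter fun p => ‖z p‖ < 1).card z le_rfl hz hsum
  exact ⟨z', h1, h2, h3.trans (Nat.le_succ k)⟩
end
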